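/- arXiv:1307.2163 — 2 statements merged into one kernel-verified Lean document; each statement's English description precedes it below -/
import Mathlib

section
/- The visual boundary ∂DL_2(q) is totally disconnected: every subset with at least two points is disconnected. -/
/-- A vertex of the (q+1)-regular tree with a distinguished end, in the
horocyclic model: a height `k ∈ ℤ` together with a finitely supported
labelling of the levels strictly below `k`. -/
structure TreeVert (q : ℕ) where
  height : ℤ
  labels : ℤ → ℕ
  labels_lt : ∀ n, labels n = 0 ∨ labels n < q
  supp_below : ∀ n, height ≤ n → labels n = 0
  fin_supp : (Function.support labels).Finite

namespace DL

variable {q d : ℕ}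

/-- `v` is a child of `u` (one step further from the distinguished end). -/
abbrev treeAdjUp (u v : TreeVert q) : Prop :=
  v.height = u.height + 1 ∧ ∀ n, n ≠ u.height → v.labels n = u.labels n

/-- The (q+1)-regular tree. -/
def TreeGraph (q : ℕ) : SimpleGraph (TreeVert q) where
  Adj u v := treeAdjUp u v ∨ treeAdjUp v u
  symm := ⟨fun u v h => Or.symm h⟩
  loopless := by
    constructor
    intro u h
    rcases h with ⟨h1, _⟩ | ⟨h1, _⟩ <;> omega

/-- The base vertex of the tree. -/
def treeOrigin (q : ℕ) : TreeVert q :=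
  ⟨0, fun _ => 0, fun _ => Or.inl rfl, fun _ _ => rfl, by simp⟩

/-- Vertices of the Diestel–Leader graph `DL_d(q)`:
`d`-tuples of tree vertices whose heights sum to zero. -/
def DLVert (d q : ℕ) : Type :=
  {x : Fin d → TreeVert q // (∑ i, (x i).height) = 0}

/-- The Diestel–Leader graph `DL_d(q)`: an edge ascends in one tree and
descends in another, all other coordinates being fixed. -/
def DLGraph (d q : ℕ) : SimpleGraph (DLVert d q) where
  Adj v w := ∃ i j : Fin d, i ≠ j ∧ treeAdjUp (v.1 i) (w.1 i) ∧ treeAdjUp (w.1 j) (v.1 j) ∧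
      ∀ k : Fin d, k ≠ i → k ≠ j → v.1 k = w.1 k
  symm := by
    constructor
    rintro v w ⟨i, j, hij, h1, h2, h3⟩
    exact ⟨j, i, hij.symm, h2, h1, fun k hk1 hk2 => (h3 k hk2 hk1).symm⟩
  loopless := by
    constructor
    rintro v ⟨i, j, hij, ⟨h1, _⟩, _⟩
    omega

/-- The base point of `DL_d(q)`. -/
def origin (d q : ℕ) : DLVert d q :=
  ⟨fun _ => treeOrigin q, by simp [treeOrigin]⟩

/-- A geodesic ray in `DL_d(q)` : an isometric embedding of `ℕ`. -/
def IsGeodesicRay (γ : ℕ → DLVert d q) : Prop :=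
  ∀ m n : ℕ, m ≤ n → (DLGraph d q).dist (γ m) (γ n) = n - m

/-- Two rays are asymptotic when they stay at uniformly bounded distance. -/
def Asymptotic (γ γ' : ℕ → DLVert d q) : Prop :=
  ∃ C : ℕ, ∀ n : ℕ, (DLGraph d q).dist (γ n) (γ' n) ≤ C

instance : TopologicalSpace (DLVert d q) := ⊥

/-- Geodesic rays emanating from the origin, with the topology of uniform
convergence on compact sets (= pointwise convergence, the vertex set being
discrete). -/
def RaySpace (d q : ℕ) : Type :=
  {γ : ℕ → DLVert d q // IsGeodesicRay γ ∧ γ 0 = origin d q}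

instance : TopologicalSpace (RaySpace d q) := by
  unfold RaySpace; infer_instance

lemma reachable_origin (γ : RaySpace d q) (n : ℕ) :
    (DLGraph d q).Reachable (origin d q) (γ.1 n) := by
  cases n with
  | zero => rw [γ.2.2]
  | succ n =>
    have h := γ.2.1 0 (n + 1) (Nat.zero_le _)
    have hne : (DLGraph d q).dist (γ.1 0) (γ.1 (n + 1)) ≠ 0 := by
      rw [h]; omega
    have := SimpleGraph.Reachable.of_dist_ne_zero hne
    rwa [γ.2.2] at this

/-- Asymptoticity as an equivalence relation on geodesic rays from the origin. -/
def asympSetoid (d q : ℕ) : Setoid (RaySpace d q) where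
  r γ γ' := Asymptotic γ.1 γ'.1
  iseqv := by
    constructor
    · intro γ
      exact ⟨0, fun n => by simp [SimpleGraph.dist_self]⟩
    · rintro γ γ' ⟨C, hC⟩
      exact ⟨C, fun n => by rw [SimpleGraph.dist_comm]; exact hC n⟩
    · rintro a b c ⟨C1, h1⟩ ⟨C2, h2⟩
      refine ⟨C1 + C2, fun n => ?_⟩
      have hab : (DLGraph d q).Reachable (a.1 n) (b.1 n) :=
        (reachable_origin a n).symm.trans (reachable_origin b n)
      have hbc : (DLGraph d q).Reachable (b.1 n) (c.1 n) :=
        (reachable_origin b n).symm.trans (reachable_origin c n)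
      obtain ⟨p, hp⟩ := hab.exists_walk_length_eq_dist
      obtain ⟨p', hp'⟩ := hbc.exists_walk_length_eq_dist
      calc (DLGraph d q).dist (a.1 n) (c.1 n) ≤ (p.append p').length :=
            SimpleGraph.dist_le _
        _ = (DLGraph d q).dist (a.1 n) (b.1 n) + (DLGraph d q).dist (b.1 n) (c.1 n) := by
            rw [SimpleGraph.Walk.length_append, hp, hp']
        _ ≤ C1 + C2 := Nat.add_le_add (h1 n) (h2 n)

/-- The visual boundary of `DL_d(q)`: asymptotic classes of geodesic rays
from the origin, with the quotient topology. -/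
def Boundary (d q : ℕ) : Type := Quotient (asympSetoid d q)

instance : TopologicalSpace (Boundary d q) := by
  unfold Boundary; infer_instance

/-- A ray in `DL_2(q)` descends for exactly `n` steps in tree `i`
(bottoming out at height `-n`), then ascends forever in tree `i`.
For `n = 0` this says the ray ascends forever in tree `i` with no turn. -/
def DescendsExactly (i : Fin 2) (n : ℕ) (γ : ℕ → DLVert 2 q) : Prop :=
  (∀ t : ℕ, t ≤ n → ((γ t).1 i).height = -(t : ℤ)) ∧
  (∀ t : ℕ, n ≤ t → ((γ t).1 i).height = (t : ℤ) - 2 * n)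

/-- The subset `C_n^i` of the boundary: classes of rays bottoming out in
tree `i` after descending exactly `n` edges. -/
def Cset (q : ℕ) (i : Fin 2) (n : ℕ) : Set (Boundary 2 q) :=
  {x | ∃ γ : RaySpace 2 q, Quotient.mk (asympSetoid 2 q) γ = x ∧ DescendsExactly i n γ.1}

/-- Projection of a path in `DL_d(q)` to the `i`-th tree. -/
def proj (i : Fin d) (γ : ℕ → DLVert d q) : ℕ → TreeVert q := fun n => (γ n).1 i

/-- Two (lazy) paths in the tree converge to the same end: both eventually
leave every ball, and they come within a uniformly bounded distance of each
other at arbitrarily late times. -/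
def SameEnd (a b : ℕ → TreeVert q) : Prop :=
  (∀ R : ℕ, ∃ N : ℕ, ∀ n, N ≤ n → R ≤ (TreeGraph q).dist (a 0) (a n)) ∧
  (∀ R : ℕ, ∃ N : ℕ, ∀ n, N ≤ n → R ≤ (TreeGraph q).dist (b 0) (b n)) ∧
  (∃ C : ℕ, ∀ N : ℕ, ∃ m n, N ≤ m ∧ N ≤ n ∧ (TreeGraph q).dist (a m) (b n) ≤ C)

/-- The step from `p m` to `p (m+1)` descends in tree `i`. -/
def StepDown (i : Fin d) (p : ℕ → DLVert d q) (m : ℕ) : Prop :=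
  treeAdjUp ((p (m + 1)).1 i) ((p m).1 i)

/-- The step from `p m` to `p (m+1)` ascends in tree `i`. -/
def StepUp (i : Fin d) (p : ℕ → DLVert d q) (m : ℕ) : Prop :=
  treeAdjUp ((p m).1 i) ((p (m + 1)).1 i)

/-- A turn in tree `i`: a subpath beginning with a descent in `T_i` at step `t`,
ending with an ascent in `T_i` at step `s`, with no intervening step
involving `T_i`. -/
def IsTurn (i : Fin d) (p : ℕ → DLVert d q) (t s : ℕ) : Prop :=
  t < s ∧ StepDown i p t ∧ StepUp i p s ∧
    ∀ m, t < m → m < s → (p (m + 1)).1 i = (p m).1 i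


-- ====== NEW MATERIAL ======

lemma TreeVert.ext' {a b : TreeVert q} (h1 : a.height = b.height)
    (h2 : ∀ n, a.labels n = b.labels n) : a = b := by
  cases a; cases b
  simp only [TreeVert.mk.injEq]
  exact ⟨h1, funext h2⟩

lemma DLVert.ext' {x y : DLVert d q} (h : ∀ k, x.1 k = y.1 k) : x = y :=
  Subtype.ext (funext h)

lemma sum_pair {x : DLVert 2 q} : (x.1 0).height + (x.1 1).height = 0 := by
  have := x.2; rwa [Fin.sum_univ_two] at this

lemma fin2_cases (i j k : Fin 2) (hij : i ≠ j) : k = i ∨ k = j := by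
  fin_cases i <;> fin_cases j <;> fin_cases k <;> simp_all

lemma sum_pair' {x : DLVert 2 q} {i j : Fin 2} (hij : i ≠ j) :
    (x.1 i).height + (x.1 j).height = 0 := by
  fin_cases i <;> fin_cases j <;> simp_all
  · exact sum_pair
  · rw [add_comm]; exact sum_pair

lemma adj_iff {v w : DLVert 2 q} {i j : Fin 2} (hij : i ≠ j) :
    (DLGraph 2 q).Adj v w ↔
      (treeAdjUp (v.1 i) (w.1 i) ∧ treeAdjUp (w.1 j) (v.1 j)) ∨
      (treeAdjUp (v.1 j) (w.1 j) ∧ treeAdjUp (w.1 i) (v.1 i)) := by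
  constructor
  · rintro ⟨i', j', hij', h1, h2, _⟩
    rcases fin2_cases i' j' i hij' with hi | hi <;>
      rcases fin2_cases i' j' j hij' with hj | hj
    · exact absurd (hi.trans hj.symm) hij
    · exact Or.inl ⟨by rw [hi]; exact h1, by rw [hj]; exact h2⟩
    · exact Or.inr ⟨by rw [hj]; exact h1, by rw [hi]; exact h2⟩
    · exact absurd (hi.trans hj.symm) hij
  · rintro (⟨h1, h2⟩ | ⟨h1, h2⟩)
    · exact ⟨i, j, hij, h1, h2, fun k hk1 hk2 =>
        absurd (fin2_cases i j k hij) (by tauto)⟩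
    · exact ⟨j, i, hij.symm, h1, h2, fun k hk1 hk2 =>
        absurd (fin2_cases i j k hij) (by tauto)⟩

/-- parent of a tree vertex -/
def parentT (v : TreeVert q) : TreeVert q :=
  ⟨v.height - 1, fun n => if v.height - 1 ≤ n then 0 else v.labels n,
    fun n => by split <;> [exact Or.inl rfl; exact v.labels_lt n],
    fun n hn => by rw [if_pos hn],
    (v.fin_supp).subset (by
      intro n hn
      simp only [Function.mem_support] at hn ⊢
      intro h; apply hn; split <;> simp_all)⟩

@[simp] lemma parentT_height (v : TreeVert q) : (parentT v).height = v.height - 1 := rfl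

lemma parentT_labels (v : TreeVert q) (n : ℤ) :
    (parentT v).labels n = if v.height - 1 ≤ n then 0 else v.labels n := rfl

/-- a canonical child (labels unchanged; the new label is 0) -/
def childT0 (v : TreeVert q) : TreeVert q :=
  ⟨v.height + 1, v.labels, v.labels_lt,
    fun n hn => v.supp_below n (by omega), v.fin_supp⟩

/-- the child of `v` whose new label is `f v.height` -/
def childTF (f : ℤ → ℕ) (hf : ∀ n, f n = 0 ∨ f n < q) (v : TreeVert q) : TreeVert q :=
  ⟨v.height + 1, fun n => if n = v.height then f n else v.labels n,
    fun n => by split <;> [exact hf n; exact v.labels_lt n],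
    fun n hn => by
      rw [if_neg (by omega)]; exact v.supp_below n (by omega),
    ((v.fin_supp).union (Set.finite_singleton v.height)).subset (by
      intro n hn
      simp only [Function.mem_support] at hn
      by_cases h : n = v.height
      · exact Or.inr h
      · rw [if_neg h] at hn; exact Or.inl hn)⟩

lemma treeAdjUp_childT0 (v : TreeVert q) : treeAdjUp v (childT0 v) :=
  ⟨rfl, fun _ _ => rfl⟩

lemma treeAdjUp_childTF (f : ℤ → ℕ) (hf : ∀ n, f n = 0 ∨ f n < q) (v : TreeVert q) :
    treeAdjUp v (childTF f hf v) :=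
  ⟨rfl, fun n hn => if_neg hn⟩

lemma treeAdjUp_parentT (v : TreeVert q) : treeAdjUp (parentT v) v := by
  refine ⟨by simp [parentT], fun n hn => ?_⟩
  simp only [parentT_height] at hn
  rw [parentT_labels]
  split
  · next h => exact v.supp_below n (by omega)
  · rfl

-- ====== iterates of tree steps ======

lemma parentT_iter_height (k : ℕ) (v : TreeVert q) :
    (parentT^[k] v).height = v.height - k := by
  induction k with
  | zero => simp
  | succ k ih =>
    rw [Function.iterate_succ_apply', parentT_height, ih]
    push_cast; ring

lemma parentT_iter_labels (k : ℕ) (v : TreeVert q) (n : ℤ) :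
    (parentT^[k] v).labels n = if v.height - k ≤ n then 0 else v.labels n := by
  induction k with
  | zero =>
    simp only [Function.iterate_zero, id_eq, Nat.cast_zero, sub_zero]
    split
    · next h => exact v.supp_below n h
    · rfl
  | succ k ih =>
    rw [Function.iterate_succ_apply', parentT_labels, parentT_iter_height, ih]
    push_cast
    split_ifs <;> first | rfl | omega

lemma childT0_iter_height (k : ℕ) (v : TreeVert q) :
    (childT0^[k] v).height = v.height + k := by
  induction k with
  | zero => simp
  | succ k ih =>
    rw [Function.iterate_succ_apply']
    show (childT0^[k] v).height + 1 = _
    rw [ih]; push_cast; ring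

lemma childT0_iter_labels (k : ℕ) (v : TreeVert q) (n : ℤ) :
    (childT0^[k] v).labels n = v.labels n := by
  induction k with
  | zero => simp
  | succ k ih => rw [Function.iterate_succ_apply']; exact ih

lemma childTF_iter_height (f : ℤ → ℕ) (hf : ∀ n, f n = 0 ∨ f n < q) (k : ℕ) (v : TreeVert q) :
    ((childTF f hf)^[k] v).height = v.height + k := by
  induction k with
  | zero => simp
  | succ k ih =>
    rw [Function.iterate_succ_apply']
    show ((childTF f hf)^[k] v).height + 1 = _
    rw [ih]; push_cast; ring

lemma childTF_iter_labels (f : ℤ → ℕ) (hf : ∀ n, f n = 0 ∨ f n < q) (k : ℕ) (v : TreeVert q)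
    (n : ℤ) :
    ((childTF f hf)^[k] v).labels n =
      if v.height ≤ n ∧ n < v.height + k then f n else v.labels n := by
  induction k with
  | zero =>
    simp only [Function.iterate_zero, id_eq, Nat.cast_zero, add_zero]
    rw [if_neg (by omega)]
  | succ k ih =>
    rw [Function.iterate_succ_apply']
    show (if n = ((childTF f hf)^[k] v).height then f n else ((childTF f hf)^[k] v).labels n) = _
    rw [childTF_iter_height, ih]
    push_cast
    by_cases hk : n = v.height + (k : ℤ)
    · rw [if_pos hk, if_pos (by constructor <;> omega)]
    · rw [if_neg hk]
      split_ifs <;> first | rfl | (exfalso; omega)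

-- ====== DL step functions ======

/-- build a `DLVert 2 q` from its two coordinates -/
def upd2 (i j : Fin 2) (hij : i ≠ j) (a b : TreeVert q)
    (hsum : a.height + b.height = 0) : DLVert 2 q :=
  ⟨fun k => if k = i then a else b, by
    rw [Fin.sum_univ_two]
    fin_cases i <;> fin_cases j <;> simp_all <;> omega⟩

lemma upd2_left (i j : Fin 2) (hij : i ≠ j) (a b : TreeVert q) (h) :
    (upd2 i j hij a b h).1 i = a := by simp [upd2]

lemma upd2_right (i j : Fin 2) (hij : i ≠ j) (a b : TreeVert q) (h) :
    (upd2 i j hij a b h).1 j = b := by simp [upd2, hij.symm]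

/-- step: go down (towards the end) in tree `i`, up with label 0 in tree `j`. -/
def sDown (i j : Fin 2) (hij : i ≠ j) (v : DLVert 2 q) : DLVert 2 q :=
  upd2 i j hij (parentT (v.1 i)) (childT0 (v.1 j))
    (by have := sum_pair' (x := v) hij
        simp only [parentT_height, childT0]; omega)

/-- step: go up in tree `i` writing the label prescribed by `f`, down in tree `j`. -/
def sUp (i j : Fin 2) (hij : i ≠ j) (f : ℤ → ℕ) (hf : ∀ n, f n = 0 ∨ f n < q)
    (v : DLVert 2 q) : DLVert 2 q :=
  upd2 i j hij (childTF f hf (v.1 i)) (parentT (v.1 j))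
    (by have := sum_pair' (x := v) hij
        simp only [parentT_height, childTF]; omega)

lemma sDown_left (i j : Fin 2) (hij : i ≠ j) (v : DLVert 2 q) :
    (sDown i j hij v).1 i = parentT (v.1 i) := upd2_left ..

lemma sDown_right (i j : Fin 2) (hij : i ≠ j) (v : DLVert 2 q) :
    (sDown i j hij v).1 j = childT0 (v.1 j) := upd2_right ..

lemma sUp_left (i j : Fin 2) (hij : i ≠ j) (f hf) (v : DLVert 2 q) :
    (sUp i j hij f hf v).1 i = childTF f hf (v.1 i) := upd2_left ..

lemma sUp_right (i j : Fin 2) (hij : i ≠ j) (f hf) (v : DLVert 2 q) :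
    (sUp i j hij f hf v).1 j = parentT (v.1 j) := upd2_right ..

lemma adj_sDown (i j : Fin 2) (hij : i ≠ j) (v : DLVert 2 q) :
    (DLGraph 2 q).Adj v (sDown i j hij v) := by
  rw [adj_iff hij]
  exact Or.inr ⟨by rw [sDown_right]; exact treeAdjUp_childT0 _,
    by rw [sDown_left]; exact treeAdjUp_parentT _⟩

lemma adj_sUp (i j : Fin 2) (hij : i ≠ j) (f hf) (v : DLVert 2 q) :
    (DLGraph 2 q).Adj v (sUp i j hij f hf v) := by
  rw [adj_iff hij]
  exact Or.inl ⟨by rw [sUp_left]; exact treeAdjUp_childTF _ _ _,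
    by rw [sUp_right]; exact treeAdjUp_parentT _⟩

lemma sDown_iter (i j : Fin 2) (hij : i ≠ j) (k : ℕ) (v : DLVert 2 q) :
    (((sDown i j hij)^[k] v).1 i = parentT^[k] (v.1 i)) ∧
    (((sDown i j hij)^[k] v).1 j = childT0^[k] (v.1 j)) := by
  induction k with
  | zero => simp
  | succ k ih =>
    rw [Function.iterate_succ_apply', Function.iterate_succ_apply',
      Function.iterate_succ_apply']
    exact ⟨by rw [sDown_left, ih.1], by rw [sDown_right, ih.2]⟩

lemma sUp_iter (i j : Fin 2) (hij : i ≠ j) (f hf) (k : ℕ) (v : DLVert 2 q) :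
    (((sUp i j hij f hf)^[k] v).1 i = (childTF f hf)^[k] (v.1 i)) ∧
    (((sUp i j hij f hf)^[k] v).1 j = parentT^[k] (v.1 j)) := by
  induction k with
  | zero => simp
  | succ k ih =>
    rw [Function.iterate_succ_apply', Function.iterate_succ_apply',
      Function.iterate_succ_apply']
    exact ⟨by rw [sUp_left, ih.1], by rw [sUp_right, ih.2]⟩

lemma exists_walk_iterate {V : Type*} {G : SimpleGraph V} (S : V → V)
    (hS : ∀ v, G.Adj v (S v)) (v : V) (k : ℕ) :
    ∃ w : G.Walk v (S^[k] v), w.length = k := by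
  induction k with
  | zero => exact ⟨SimpleGraph.Walk.nil, rfl⟩
  | succ k ih =>
    obtain ⟨w, hw⟩ := ih
    rw [Function.iterate_succ_apply']
    exact ⟨w.append (SimpleGraph.Walk.cons (hS _) SimpleGraph.Walk.nil),
      by rw [SimpleGraph.Walk.length_append, hw]; simp⟩

-- ====== the 3-phase shortcut walk ======

theorem shortcut {i j : Fin 2} (hij : i ≠ j) (x y : DLVert 2 q) (Mi Mj : ℤ)
    (hMix : Mi ≤ (x.1 i).height) (hMiy : Mi ≤ (y.1 i).height)
    (hMjx : Mj ≤ (x.1 j).height) (hMjy : Mj ≤ (y.1 j).height)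
    (hLi : ∀ n, n < Mi → (x.1 i).labels n = (y.1 i).labels n)
    (hLj : ∀ n, n < Mj → (x.1 j).labels n = (y.1 j).labels n) :
    ∃ w : (DLGraph 2 q).Walk x y,
      (w.length : ℤ) = 2 * ((x.1 i).height - Mi) + ((x.1 j).height - Mj)
        + ((y.1 j).height - Mj) := by
  have hx0 : (x.1 i).height + (x.1 j).height = 0 := sum_pair' hij
  have hy0 : (y.1 i).height + (y.1 j).height = 0 := sum_pair' hij
  set P : ℕ := ((x.1 i).height - Mi).toNat with hP
  set A2 : ℕ := ((x.1 j).height - Mj).toNat with hA2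
  set Q : ℕ := P + A2 with hQ
  set R : ℕ := ((y.1 j).height - Mj).toNat with hR
  have hPc : (P : ℤ) = (x.1 i).height - Mi := Int.toNat_of_nonneg (by omega)
  have hA2c : (A2 : ℤ) = (x.1 j).height - Mj := Int.toNat_of_nonneg (by omega)
  have hRc : (R : ℤ) = (y.1 j).height - Mj := Int.toNat_of_nonneg (by omega)
  have hQc : (Q : ℤ) = ((x.1 i).height - Mi) + ((x.1 j).height - Mj) := by
    push_cast [hQ]; omega
  set z1 : DLVert 2 q := (sDown i j hij)^[P] x with hz1
  set fi := (y.1 i).labels with hfi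
  set fj := (y.1 j).labels with hfj
  set z2 : DLVert 2 q := (sUp i j hij fi (y.1 i).labels_lt)^[Q] z1 with hz2
  set z3 : DLVert 2 q := (sUp j i hij.symm fj (y.1 j).labels_lt)^[R] z2 with hz3
  -- coordinates of z1
  have hz1i : z1.1 i = parentT^[P] (x.1 i) := (sDown_iter i j hij P x).1
  have hz1j : z1.1 j = childT0^[P] (x.1 j) := (sDown_iter i j hij P x).2
  have hz1ih : (z1.1 i).height = Mi := by rw [hz1i, parentT_iter_height]; omega
  have hz1il : ∀ n : ℤ, (z1.1 i).labels n = if Mi ≤ n then 0 else (x.1 i).labels n := by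
    intro n; rw [hz1i, parentT_iter_labels]
    split_ifs <;> first | rfl | (exfalso; omega)
  have hz1jh : (z1.1 j).height = (x.1 j).height + P := by rw [hz1j, childT0_iter_height]
  have hz1jl : ∀ n : ℤ, (z1.1 j).labels n = (x.1 j).labels n := by
    intro n; rw [hz1j, childT0_iter_labels]
  -- coordinates of z2
  have hz2i : z2.1 i = (childTF fi (y.1 i).labels_lt)^[Q] (z1.1 i) :=
    (sUp_iter i j hij fi (y.1 i).labels_lt Q z1).1
  have hz2j : z2.1 j = parentT^[Q] (z1.1 j) :=
    (sUp_iter i j hij fi (y.1 i).labels_lt Q z1).2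
  have hz2ih : (z2.1 i).height = Mi + Q := by
    rw [hz2i, childTF_iter_height, hz1ih]
  have hz2il : ∀ n : ℤ, (z2.1 i).labels n =
      if Mi ≤ n ∧ n < Mi + Q then fi n else (z1.1 i).labels n := by
    intro n; rw [hz2i, childTF_iter_labels, hz1ih]
  have hz2jh : (z2.1 j).height = Mj := by rw [hz2j, parentT_iter_height, hz1jh]; omega
  have hz2jl : ∀ n : ℤ, (z2.1 j).labels n = if Mj ≤ n then 0 else (x.1 j).labels n := by
    intro n; rw [hz2j, parentT_iter_labels, hz1jh, hz1jl]
    split_ifs <;> first | rfl | (exfalso; omega)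
  -- coordinates of z3
  have hz3j : z3.1 j = (childTF fj (y.1 j).labels_lt)^[R] (z2.1 j) :=
    (sUp_iter j i hij.symm fj (y.1 j).labels_lt R z2).1
  have hz3i : z3.1 i = parentT^[R] (z2.1 i) :=
    (sUp_iter j i hij.symm fj (y.1 j).labels_lt R z2).2
  have hz3jh : (z3.1 j).height = (y.1 j).height := by
    rw [hz3j, childTF_iter_height, hz2jh]; omega
  have hz3ih : (z3.1 i).height = (y.1 i).height := by
    rw [hz3i, parentT_iter_height, hz2ih]; omega
  -- z3 = y
  have hz3y : z3 = y := by
    apply DLVert.ext'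
    intro k
    rcases fin2_cases i j k hij with h | h
    · rw [h]; apply TreeVert.ext' hz3ih
      intro n
      rw [hz3i, parentT_iter_labels, hz2ih]
      have hth : Mi + (Q : ℤ) - R = (y.1 i).height := by omega
      rw [hth]
      by_cases hn : (y.1 i).height ≤ n
      · rw [if_pos hn, (y.1 i).supp_below n hn]
      · rw [if_neg hn, hz2il]
        by_cases hn2 : Mi ≤ n
        · rw [if_pos ⟨hn2, by omega⟩]
        · rw [if_neg (by tauto), hz1il, if_neg hn2]
          exact hLi n (by omega)
    · rw [h]; apply TreeVert.ext' hz3jh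
      intro n
      rw [hz3j, childTF_iter_labels, hz2jh]
      by_cases hn : Mj ≤ n ∧ n < Mj + R
      · rw [if_pos hn]
      · rw [if_neg hn, hz2jl]
        by_cases hn2 : Mj ≤ n
        · have : (y.1 j).height ≤ n := by omega
          rw [if_pos hn2, (y.1 j).supp_below n this]
        · rw [if_neg hn2]
          exact hLj n (by omega)
  -- the walk
  obtain ⟨w1, hw1⟩ := exists_walk_iterate (sDown i j hij) (adj_sDown i j hij) x P
  obtain ⟨w2, hw2⟩ := exists_walk_iterate (sUp i j hij fi (y.1 i).labels_lt)
    (adj_sUp i j hij fi (y.1 i).labels_lt) z1 Q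
  obtain ⟨w3, hw3⟩ := exists_walk_iterate (sUp j i hij.symm fj (y.1 j).labels_lt)
    (adj_sUp j i hij.symm fj (y.1 j).labels_lt) z2 R
  refine ⟨(w1.append (w2.append w3)).copy rfl hz3y, ?_⟩
  rw [SimpleGraph.Walk.length_copy, SimpleGraph.Walk.length_append,
    SimpleGraph.Walk.length_append, hw1, hw2, hw3]
  push_cast
  omega

-- ====== lower bounds via tree projections ======

lemma tree_walk_meet {u v : TreeVert q} (w : (TreeGraph q).Walk u v) :
    ∃ m : ℤ, m ≤ u.height ∧ m ≤ v.height ∧ (∀ n, n < m → u.labels n = v.labels n) ∧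
      (u.height - m) + (v.height - m) ≤ (w.length : ℤ) := by
  induction w with
  | nil => exact ⟨_, le_refl _, le_refl _, fun n _ => rfl, by simp⟩
  | @cons u b v h p ih =>
    obtain ⟨m₁, hm1, hm2, hm3, hm4⟩ := ih
    rw [SimpleGraph.Walk.length_cons]
    rcases h with hup | hdown
    · refine ⟨min m₁ u.height, by omega, by omega, fun n hn => ?_, by
        push_cast
        have : b.height = u.height + 1 := hup.1
        omega⟩
      rw [← hup.2 n (by omega)]
      exact hm3 n (by omega)
    · have hbu : u.height = b.height + 1 := hdown.1
      refine ⟨m₁, by omega, by omega, fun n hn => ?_, by push_cast; omega⟩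
      rw [hdown.2 n (by omega)]
      exact hm3 n hn

lemma walk_proj {x y : DLVert 2 q} (w : (DLGraph 2 q).Walk x y) (i : Fin 2) :
    ∃ w' : (TreeGraph q).Walk (x.1 i) (y.1 i), w'.length = w.length := by
  induction w with
  | nil => exact ⟨SimpleGraph.Walk.nil, rfl⟩
  | @cons x b y h p ih =>
    obtain ⟨w', hw'⟩ := ih
    obtain ⟨i', j', hij', h1, h2, _⟩ := h
    have hadj : (TreeGraph q).Adj (x.1 i) (b.1 i) := by
      rcases fin2_cases i' j' i hij' with hh | hh
      · rw [hh]; exact Or.inl h1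
      · rw [hh]; exact Or.inr h2
    exact ⟨SimpleGraph.Walk.cons hadj w', by
      rw [SimpleGraph.Walk.length_cons, hw']; rfl⟩

lemma dist_meet (x y : DLVert 2 q) (hr : (DLGraph 2 q).Reachable x y) (i : Fin 2) :
    ∃ m : ℤ, m ≤ (x.1 i).height ∧ m ≤ (y.1 i).height ∧
      (∀ n, n < m → (x.1 i).labels n = (y.1 i).labels n) ∧
      ((x.1 i).height - m) + ((y.1 i).height - m) ≤ ((DLGraph 2 q).dist x y : ℤ) := by
  obtain ⟨w, hw⟩ := hr.exists_walk_length_eq_dist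
  obtain ⟨w', hw'⟩ := walk_proj w i
  obtain ⟨m, h1, h2, h3, h4⟩ := tree_walk_meet w'
  exact ⟨m, h1, h2, h3, by rw [← hw, ← hw']; exact h4⟩

lemma dist_label (x y : DLVert 2 q) (hr : (DLGraph 2 q).Reachable x y) (i : Fin 2) (n₀ : ℤ)
    (hne : (x.1 i).labels n₀ ≠ (y.1 i).labels n₀) :
    ((x.1 i).height - n₀) + ((y.1 i).height - n₀) ≤ ((DLGraph 2 q).dist x y : ℤ) := by
  obtain ⟨m, h1, h2, h3, h4⟩ := dist_meet x y hr i
  have hm : m ≤ n₀ := by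
    by_contra hc
    exact hne (h3 n₀ (by omega))
  omega


-- ====== ray basics ======

/-- height of the `i`-coordinate at time `t` -/
def hI (γ : RaySpace 2 q) (i : Fin 2) (t : ℕ) : ℤ := ((γ.1 t).1 i).height

/-- the step `t → t+1` ascends in tree `i` -/
def SU (γ : RaySpace 2 q) (i : Fin 2) (t : ℕ) : Prop :=
  treeAdjUp ((γ.1 t).1 i) ((γ.1 (t + 1)).1 i)

lemma other_exists (i : Fin 2) : ∃ j, i ≠ j := by
  fin_cases i
  exacts [⟨1, by decide⟩, ⟨0, by decide⟩]

variable (γ : RaySpace 2 q)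

lemma ray_reach (a b : ℕ) : (DLGraph 2 q).Reachable (γ.1 a) (γ.1 b) :=
  (reachable_origin γ a).symm.trans (reachable_origin γ b)

lemma hI_zero (i : Fin 2) : hI γ i 0 = 0 := by
  show ((γ.1 0).1 i).height = 0
  rw [γ.2.2]
  rfl

lemma hI_sum {i j : Fin 2} (hij : i ≠ j) (t : ℕ) : hI γ i t + hI γ j t = 0 :=
  sum_pair' hij

lemma step_adj (t : ℕ) : (DLGraph 2 q).Adj (γ.1 t) (γ.1 (t + 1)) := by
  have hd := γ.2.1 t (t + 1) (by omega)
  have hd1 : (DLGraph 2 q).dist (γ.1 t) (γ.1 (t + 1)) = 1 := by omega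
  exact SimpleGraph.dist_eq_one_iff_adj.mp hd1

lemma step_cases {i j : Fin 2} (hij : i ≠ j) (t : ℕ) :
    (SU γ i t ∧ treeAdjUp ((γ.1 (t + 1)).1 j) ((γ.1 t).1 j)) ∨
    (SU γ j t ∧ treeAdjUp ((γ.1 (t + 1)).1 i) ((γ.1 t).1 i)) :=
  (adj_iff hij).mp (step_adj γ t)

lemma hI_up {i : Fin 2} {t : ℕ} (h : SU γ i t) : hI γ i (t + 1) = hI γ i t + 1 := h.1

lemma not_both {i j : Fin 2} (hij : i ≠ j) {t : ℕ} (h1 : SU γ i t) (h2 : SU γ j t) :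
    False := by
  have e1 := hI_sum γ hij t
  have e2 := hI_sum γ hij (t + 1)
  have := hI_up γ h1
  have := hI_up γ h2
  omega

lemma step_or {i j : Fin 2} (hij : i ≠ j) (t : ℕ) : SU γ i t ∨ SU γ j t := by
  rcases step_cases γ hij t with ⟨h, _⟩ | ⟨h, _⟩
  exacts [Or.inl h, Or.inr h]

lemma step_down {i j : Fin 2} (hij : i ≠ j) {t : ℕ} (h : SU γ j t) :
    treeAdjUp ((γ.1 (t + 1)).1 i) ((γ.1 t).1 i) := by
  rcases step_cases γ hij t with ⟨h', _⟩ | ⟨_, h'⟩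
  · exact absurd h (fun hh => not_both γ hij h' hh)
  · exact h'

lemma hI_down {i j : Fin 2} (hij : i ≠ j) {t : ℕ} (h : SU γ j t) :
    hI γ i (t + 1) = hI γ i t - 1 := by
  have := (step_down γ hij h).1
  show ((γ.1 (t+1)).1 i).height = ((γ.1 t).1 i).height - 1
  omega

lemma step_pm {i : Fin 2} (t : ℕ) :
    hI γ i (t + 1) = hI γ i t + 1 ∨ hI γ i (t + 1) = hI γ i t - 1 := by
  obtain ⟨j, hij⟩ := other_exists i
  rcases step_or γ hij t with h | h
  · exact Or.inl (hI_up γ h)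
  · exact Or.inr (hI_down γ hij h)

lemma step_labels_low (i : Fin 2) (t : ℕ) (n : ℤ) (h1 : n < hI γ i t)
    (h2 : n < hI γ i (t + 1)) :
    ((γ.1 (t + 1)).1 i).labels n = ((γ.1 t).1 i).labels n := by
  obtain ⟨j, hij⟩ := other_exists i
  rcases step_or γ hij t with h | h
  · refine h.2 n ?_
    have he : hI γ i t = ((γ.1 t).1 i).height := rfl
    omega
  · refine ((step_down γ hij h).2 n ?_).symm
    have he : hI γ i (t + 1) = ((γ.1 (t + 1)).1 i).height := rfl
    omega

lemma labels_agree (i : Fin 2) (a : ℕ) (M : ℤ) :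
    ∀ k : ℕ, (∀ t, a ≤ t → t ≤ a + k → M ≤ hI γ i t) →
      ∀ n : ℤ, n < M → ((γ.1 (a + k)).1 i).labels n = ((γ.1 a).1 i).labels n := by
  intro k
  induction k with
  | zero => intro _ n _; rfl
  | succ k ih =>
    intro hmin n hn
    have : a + (k + 1) = (a + k) + 1 := by omega
    rw [this, step_labels_low γ i (a + k) n
      (by have := hmin (a+k) (by omega) (by omega); omega)
      (by have := hmin (a+k+1) (by omega) (by omega); omega)]
    exact ih (fun t h1 h2 => hmin t h1 (by omega)) n hn

/-- The master geodesic inequality : on the window `[a,b]`, if `Mi`/`Mj` are lower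
bounds for the heights in trees `i`/`j`, then elapsed time is bounded. -/
lemma SCray {i j : Fin 2} (hij : i ≠ j) (a b : ℕ) (hab : a ≤ b) (Mi Mj : ℤ)
    (hMi : ∀ t, a ≤ t → t ≤ b → Mi ≤ hI γ i t)
    (hMj : ∀ t, a ≤ t → t ≤ b → Mj ≤ hI γ j t) :
    (b : ℤ) - a ≤ 2 * (hI γ i a - Mi) + (hI γ j a - Mj) + (hI γ j b - Mj) := by
  have hbb : a + (b - a) = b := by omega
  have hLi : ∀ n, n < Mi → ((γ.1 a).1 i).labels n = ((γ.1 b).1 i).labels n := by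
    intro n hn
    rw [← hbb]
    exact (labels_agree γ i a Mi (b - a) (fun t h1 h2 => hMi t h1 (by omega)) n hn).symm
  have hLj : ∀ n, n < Mj → ((γ.1 a).1 j).labels n = ((γ.1 b).1 j).labels n := by
    intro n hn
    rw [← hbb]
    exact (labels_agree γ j a Mj (b - a) (fun t h1 h2 => hMj t h1 (by omega)) n hn).symm
  obtain ⟨w, hw⟩ := shortcut hij (γ.1 a) (γ.1 b) Mi Mj
    (hMi a (le_refl a) hab) (hMi b hab (le_refl b))
    (hMj a (le_refl a) hab) (hMj b hab (le_refl b)) hLi hLj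
  have hdl : (DLGraph 2 q).dist (γ.1 a) (γ.1 b) ≤ w.length := SimpleGraph.dist_le w
  have hdd := γ.2.1 a b hab
  show (b:ℤ) - a ≤ 2 * (((γ.1 a).1 i).height - Mi) + (((γ.1 a).1 j).height - Mj)
    + (((γ.1 b).1 j).height - Mj)
  rw [← hw]
  omega

-- ====== monotone runs ======

lemma up_run (i : Fin 2) (a : ℕ) :
    ∀ k : ℕ, (∀ t, a ≤ t → t < a + k → SU γ i t) → hI γ i (a + k) = hI γ i a + k := by
  intro k
  induction k with
  | zero => simp
  | succ k ih =>
    intro h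
    have he : a + (k + 1) = (a + k) + 1 := by omega
    rw [he, hI_up γ (h (a + k) (by omega) (by omega)),
      ih (fun t h1 h2 => h t h1 (by omega))]
    push_cast; ring

lemma down_run {i j : Fin 2} (hij : i ≠ j) (a : ℕ) :
    ∀ k : ℕ, (∀ t, a ≤ t → t < a + k → SU γ j t) → hI γ i (a + k) = hI γ i a - k := by
  intro k
  induction k with
  | zero => simp
  | succ k ih =>
    intro h
    have he : a + (k + 1) = (a + k) + 1 := by omega
    rw [he, hI_down γ hij (h (a + k) (by omega) (by omega)),
      ih (fun t h1 h2 => h t h1 (by omega))]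
    push_cast; ring

-- ====== after the turn, the direction is constant forever ======

lemma tail_const {i j : Fin 2} (hij : i ≠ j) (n : ℕ) (hn : 1 ≤ n)
    (hpre : ∀ t, t < n → SU γ j t) (hn0 : SU γ i n) :
    ∀ t, n ≤ t → SU γ i t := by
  classical
  by_contra hcon
  push_neg at hcon
  have hex : ∃ u, n ≤ u ∧ ¬SU γ i u := hcon
  set u := Nat.find hex with hu
  obtain ⟨hun, hunot⟩ := Nat.find_spec hex
  have humin : ∀ v, n ≤ v → v < u → SU γ i v := by
    intro v h1 h2
    by_contra hcc
    have hle : Nat.find hex ≤ v := Nat.find_le ⟨h1, hcc⟩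
    omega
  have huj : SU γ j u := (step_or γ hij u).resolve_left hunot
  have hugt : n < u := by
    rcases Nat.lt_or_ge n u with h | h
    · exact h
    · exfalso
      have heq : Nat.find hex = n := le_antisymm h hun
      exact hunot (by rw [heq]; exact hn0)
  -- heights of tree j so far
  have hA : ∀ t, t ≤ n → hI γ j t = t := by
    intro t ht
    have := up_run γ j 0 t (fun s h1 h2 => hpre s (by omega))
    rw [Nat.zero_add] at this
    rw [this, hI_zero]; ring
  have hB : ∀ t, n ≤ t → t ≤ u → hI γ j t = 2 * n - t := by
    intro t h1 h2
    have he : t = n + (t - n) := by omega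
    rw [he, down_run γ (hij.symm) n (t - n) (fun s hs1 hs2 => humin s hs1 (by omega))]
    rw [hA n (le_refl n)]
    push_cast
    omega
  by_cases hc : ∃ w, u < w ∧ SU γ i w
  · -- another switch: the four-block pattern
    set w := Nat.find hc with hw
    obtain ⟨hwu, hwi⟩ := Nat.find_spec hc
    have hwmin : ∀ v, u ≤ v → v < w → SU γ j v := by
      intro v h1 h2
      rcases Nat.lt_or_ge u v with h | h
      · refine (step_or γ hij v).resolve_left ?_
        intro hcc
        have hle : Nat.find hc ≤ v := Nat.find_le ⟨h, hcc⟩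
        omega
      · have : v = u := by omega
        rw [this]; exact huj
    have hC : ∀ t, u ≤ t → t ≤ w → hI γ j t = 2 * n - u + (t - u) := by
      intro t h1 h2
      have he : t = u + (t - u) := by omega
      rw [he, up_run γ j u (t - u) (fun s hs1 hs2 => hwmin s hs1 (by omega)),
        hB u hun (le_refl u)]
      push_cast
      omega
    have hD : hI γ j (w + 1) = 2 * n - u + (w - u) - 1 := by
      rw [hI_down γ hij.symm hwi, hC w (by omega) (le_refl w)]
    set k := u - n with hk
    set m := w - u with hm
    have hk1 : 1 ≤ k := by omega
    have hm1 : 1 ≤ m := by omega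
    have hsum : ∀ t, hI γ i t = - hI γ j t := by
      intro t; have := hI_sum γ hij t; omega
    rcases le_or_gt k m with hkm | hkm
    · -- m ≥ k : tree j ascends overall; use SCray with ascending tree j
      have hbound := SCray γ hij.symm (n - 1) (w + 1) (by omega)
        ((2:ℤ) * n - u) (-(2 * n - u + ((w:ℤ) - u)))
        (by intro t h1 h2
            rcases le_or_gt t n with ht | ht
            · rw [hA t ht]; omega
            · rcases le_or_gt t u with ht2 | ht2
              · rw [hB t (by omega) ht2]; omega
              · rcases le_or_gt t w with ht3 | ht3
                · rw [hC t (by omega) ht3]; omega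
                · have : t = w + 1 := by omega
                  rw [this, hD]; omega)
        (by intro t h1 h2
            rw [hsum t]
            rcases le_or_gt t n with ht | ht
            · rw [hA t ht]; omega
            · rcases le_or_gt t u with ht2 | ht2
              · rw [hB t (by omega) ht2]; omega
              · rcases le_or_gt t w with ht3 | ht3
                · rw [hC t (by omega) ht3]; omega
                · have : t = w + 1 := by omega
                  rw [this, hD]; omega)
      rw [hA (n - 1) (by omega), hsum (n-1), hsum (w+1), hA (n-1) (by omega), hD] at hbound
      push_cast at hbound
      omega
    · -- m < k : use SCray with ascending tree i
      have hbound := SCray γ hij (n - 1) (w + 1) (by omega)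
        (-(n:ℤ)) ((2:ℤ) * n - u)
        (by intro t h1 h2
            rw [hsum t]
            rcases le_or_gt t n with ht | ht
            · rw [hA t ht]; omega
            · rcases le_or_gt t u with ht2 | ht2
              · rw [hB t (by omega) ht2]; omega
              · rcases le_or_gt t w with ht3 | ht3
                · rw [hC t (by omega) ht3]; omega
                · have : t = w + 1 := by omega
                  rw [this, hD]; omega)
        (by intro t h1 h2
            rcases le_or_gt t n with ht | ht
            · rw [hA t ht]; omega
            · rcases le_or_gt t u with ht2 | ht2
              · rw [hB t (by omega) ht2]; omega
              · rcases le_or_gt t w with ht3 | ht3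
                · rw [hC t (by omega) ht3]; omega
                · have : t = w + 1 := by omega
                  rw [this, hD]; omega)
      rw [hsum (n-1), hA (n - 1) (by omega), hD] at hbound
      push_cast at hbound
      omega
  · -- no more switches : tree j ascends for ever after u
    push_neg at hc
    have hSUj : ∀ t, u ≤ t → SU γ j t := by
      intro t ht
      rcases Nat.lt_or_ge u t with h | h
      · exact (step_or γ hij t).resolve_left (hc t h)
      · have : t = u := by omega
        rw [this]; exact huj
    set k := u - n with hk
    have hk1 : 1 ≤ k := by omega
    set T := u + k + 2 with hT
    have hC : ∀ t, u ≤ t → hI γ j t = 2 * n - u + (t - u) := by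
      intro t h1
      have he : t = u + (t - u) := by omega
      rw [he, up_run γ j u (t - u) (fun s hs1 hs2 => hSUj s hs1),
        hB u hun (le_refl u)]
      push_cast
      omega
    have hsum : ∀ t, hI γ i t = - hI γ j t := by
      intro t; have := hI_sum γ hij t; omega
    have hbound := SCray γ hij.symm (n - 1) T (by omega)
      ((2:ℤ) * n - u) (-((n:ℤ) + 2))
      (by intro t h1 h2
          rcases le_or_gt t n with ht | ht
          · rw [hA t ht]; omega
          · rcases le_or_gt t u with ht2 | ht2
            · rw [hB t (by omega) ht2]; omega
            · rw [hC t (by omega)]; omega)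
      (by intro t h1 h2
          rw [hsum t]
          rcases le_or_gt t n with ht | ht
          · rw [hA t ht]; omega
          · rcases le_or_gt t u with ht2 | ht2
            · rw [hB t (by omega) ht2]; omega
            · rw [hC t (by omega)]; omega)
    rw [hA (n - 1) (by omega), hsum (n-1), hsum T, hA (n-1) (by omega), hC T (by omega)] at hbound
    push_cast at hbound
    omega

-- ====== classification of geodesic rays ======

theorem classify : ∃ i n, DescendsExactly i n γ.1 := by
  classical
  have h01 : (0 : Fin 2) ≠ 1 := by decide
  by_cases h0 : ∀ t, SU γ 0 t ↔ SU γ 0 0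
  · by_cases hs : SU γ 0 0
    · refine ⟨0, 0, fun t ht => ?_, fun t _ => ?_⟩
      · have : t = 0 := by omega
        rw [this]
        show hI γ 0 0 = 0
        rw [hI_zero]
      · show hI γ 0 t = t - 2 * (0:ℕ)
        have := up_run γ 0 0 t (fun s _ _ => (h0 s).mpr hs)
        rw [Nat.zero_add] at this
        rw [this, hI_zero]
        push_cast; ring
    · have hall : ∀ t, SU γ 1 t := fun t =>
        (step_or γ h01 t).resolve_left (fun hh => hs ((h0 t).mp hh))
      refine ⟨1, 0, fun t ht => ?_, fun t _ => ?_⟩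
      · have : t = 0 := by omega
        rw [this]
        show hI γ 1 0 = 0
        rw [hI_zero]
      · show hI γ 1 t = t - 2 * (0:ℕ)
        have := up_run γ 1 0 t (fun s _ _ => hall s)
        rw [Nat.zero_add] at this
        rw [this, hI_zero]
        push_cast; ring
  · rw [not_forall] at h0
    set n := Nat.find h0 with hnn
    have hnspec : ¬(SU γ 0 n ↔ SU γ 0 0) := Nat.find_spec h0
    have hnmin : ∀ t, t < n → (SU γ 0 t ↔ SU γ 0 0) := by
      intro t ht
      by_contra hcc
      have hle : Nat.find h0 ≤ t := Nat.find_le hcc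
      omega
    have hn1 : 1 ≤ n := by
      by_contra hh
      have h0eq : n = 0 := by omega
      exact hnspec (by rw [h0eq])
    by_cases hs : SU γ 0 0
    · -- tree 1 descends first, switch at n to ascending in tree 1
      have hpre : ∀ t, t < n → SU γ 0 t := fun t ht => (hnmin t ht).mpr hs
      have hn0 : SU γ 1 n := by
        refine (step_or γ h01 n).resolve_left ?_
        intro hh
        exact hnspec (iff_of_true hh hs)
      have htail := tail_const γ (show (1:Fin 2) ≠ 0 by decide) n hn1 hpre hn0
      refine ⟨1, n, fun t ht => ?_, fun t ht => ?_⟩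
      · show hI γ 1 t = -(t:ℤ)
        have he : t = 0 + t := by omega
        rw [he, down_run γ (show (1:Fin 2) ≠ 0 by decide) 0 t
          (fun s h1 h2 => hpre s (by omega)), hI_zero]
        push_cast; ring
      · show hI γ 1 t = t - 2 * n
        have he : t = n + (t - n) := by omega
        have hnheight : hI γ 1 n = -(n:ℤ) := by
          have he2 : n = 0 + n := by omega
          rw [he2, down_run γ (show (1:Fin 2) ≠ 0 by decide) 0 n
            (fun s h1 h2 => hpre s (by omega)), hI_zero]
          push_cast; ring
        rw [he, up_run γ 1 n (t - n) (fun s h1 h2 => htail s h1), hnheight]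
        push_cast
        omega
    · -- tree 0 descends first, switch at n to ascending in tree 0
      have hs1 : SU γ 1 0 := (step_or γ h01 0).resolve_left hs
      have hpre : ∀ t, t < n → SU γ 1 t := by
        intro t ht
        refine (step_or γ h01 t).resolve_left ?_
        intro hh
        exact hs ((hnmin t ht).mp hh)
      have hn0 : SU γ 0 n := by
        by_contra hh
        exact hnspec (iff_of_false hh hs)
      have htail := tail_const γ h01 n hn1 hpre hn0
      refine ⟨0, n, fun t ht => ?_, fun t ht => ?_⟩
      · show hI γ 0 t = -(t:ℤ)
        have he : t = 0 + t := by omega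
        rw [he, down_run γ h01 0 t (fun s h1 h2 => hpre s (by omega)), hI_zero]
        push_cast; ring
      · show hI γ 0 t = t - 2 * n
        have he : t = n + (t - n) := by omega
        have hnheight : hI γ 0 n = -(n:ℤ) := by
          have he2 : n = 0 + n := by omega
          rw [he2, down_run γ h01 0 n (fun s h1 h2 => hpre s (by omega)), hI_zero]
          push_cast; ring
        rw [he, up_run γ 0 n (t - n) (fun s h1 h2 => htail s h1), hnheight]
        push_cast
        omega

/-- heights are determined by the type -/
lemma DE_hI {i : Fin 2} {n : ℕ} (h : DescendsExactly i n γ.1) :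
    (∀ t, t ≤ n → hI γ i t = -(t:ℤ)) ∧ (∀ t, n ≤ t → hI γ i t = (t:ℤ) - 2 * n) := h

lemma type_unique {i i' : Fin 2} {n n' : ℕ} (h : DescendsExactly i n γ.1)
    (h' : DescendsExactly i' n' γ.1) : i = i' ∧ n = n' := by
  by_cases hii : i = i'
  · subst hii
    refine ⟨rfl, ?_⟩
    have e1 := (DE_hI γ h).2 (n + n') (by omega)
    have e2 := (DE_hI γ h').2 (n + n') (by omega)
    omega
  · exfalso
    have e1 := (DE_hI γ h).2 (n + n' + 1) (by omega)
    have e2 := (DE_hI γ h').2 (n + n' + 1) (by omega)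
    have e3 := hI_sum γ hii (n + n' + 1)
    push_cast at e1 e2 e3
    omega

-- ====== determinacy of rays of a given type ======

/-- the all-zero vertex at a given height -/
def zeroV (z : ℤ) : TreeVert q :=
  ⟨z, fun _ => 0, fun _ => Or.inl rfl, fun _ _ => rfl, by simp⟩

/-- the eventual label of the ascending tree at level `h` -/
def readL (γ : RaySpace 2 q) (n : ℕ) (i : Fin 2) (h : ℤ) : ℕ :=
  ((γ.1 (n + 1 + (h + n).toNat)).1 i).labels h

section DE

variable {i j : Fin 2} {n : ℕ} (hij : i ≠ j) (hDE : DescendsExactly i n γ.1)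

include hDE

lemma DE_ge : ∀ t, -(n:ℤ) ≤ hI γ i t := by
  intro t
  rcases le_or_gt t n with h | h
  · rw [(DE_hI γ hDE).1 t h]; omega
  · rw [(DE_hI γ hDE).2 t h.le]; omega

lemma DE_up_late : ∀ t, n ≤ t → SU γ i t := by
  intro t ht
  obtain ⟨j', hij'⟩ := other_exists i
  rcases step_or γ hij' t with h | h
  · exact h
  · exfalso
    have := hI_down γ hij' h
    have e1 := (DE_hI γ hDE).2 t ht
    have e2 := (DE_hI γ hDE).2 (t+1) (by omega)
    push_cast at e1 e2
    omega

lemma DE_labels_low : ∀ t, ∀ h : ℤ, h < -(n:ℤ) → ((γ.1 t).1 i).labels h = 0 := by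
  intro t
  induction t with
  | zero =>
    intro h _
    show ((γ.1 0).1 i).labels h = 0
    rw [γ.2.2]
    rfl
  | succ t ih =>
    intro h hh
    have h1 : h < hI γ i t := by have := DE_ge γ hDE t; omega
    have h2 : h < hI γ i (t + 1) := by have := DE_ge γ hDE (t+1); omega
    rw [step_labels_low γ i t h h1 h2]
    exact ih h hh

include hij in
lemma DE_j_up_early : ∀ t, SU γ j t → t < n := by
  intro t hsu
  by_contra hc
  have ht : n ≤ t := by omega
  have := hI_up γ hsu
  have e1 := (DE_hI γ hDE).2 t ht
  have e2 := (DE_hI γ hDE).2 (t+1) (by omega)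
  have s1 := hI_sum γ hij t
  have s2 := hI_sum γ hij (t+1)
  push_cast at e1 e2
  omega

include hij in
lemma DE_j_labels_neg : ∀ t, ∀ h : ℤ, h < 0 → ((γ.1 t).1 j).labels h = 0 := by
  intro t
  induction t with
  | zero =>
    intro h _
    show ((γ.1 0).1 j).labels h = 0
    rw [γ.2.2]
    rfl
  | succ t ih =>
    intro h hh
    rcases step_or γ hij t with hsu | hsu
    · -- down step in tree j
      have hd := step_down γ (Ne.symm hij) hsu
      by_cases hc : h = ((γ.1 (t+1)).1 j).height
      · rw [hc]
        exact ((γ.1 (t+1)).1 j).supp_below _ (le_refl _)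
      · rw [← hd.2 h hc]
        exact ih h hh
    · -- up step in tree j, at height hI γ j t = t ≥ 0
      have htn : t < n := DE_j_up_early γ hij hDE t hsu
      have hht : hI γ j t = t := by
        have := (DE_hI γ hDE).1 t (by omega)
        have := hI_sum γ hij t
        omega
      have hne : h ≠ ((γ.1 t).1 j).height := by
        have : hI γ j t = ((γ.1 t).1 j).height := rfl
        omega
      rw [hsu.2 h hne]
      exact ih h hh

lemma DE_read_stable : ∀ h : ℤ, -(n:ℤ) ≤ h → ∀ t, n + 1 + (h + n).toNat ≤ t →
    ((γ.1 t).1 i).labels h = readL γ n i h := by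
  intro h hh
  have hτ : ((n + 1 + (h + n).toNat : ℕ) : ℤ) = 2 * n + h + 1 := by
    push_cast
    rw [Int.toNat_of_nonneg (by omega)]
    ring
  intro t
  induction t with
  | zero => intro ht; exact absurd ht (by omega)
  | succ t ih =>
    intro ht
    rcases Nat.lt_or_ge t (n + 1 + (h + n).toNat) with hlt | hge
    · have : t + 1 = n + 1 + (h + n).toNat := by omega
      rw [this]
      rfl
    · have hsu : SU γ i t := DE_up_late γ hDE t (by omega)
      have hht : hI γ i t = (t:ℤ) - 2 * n := (DE_hI γ hDE).2 t (by omega)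
      have hne : h ≠ ((γ.1 t).1 i).height := by
        have he : hI γ i t = ((γ.1 t).1 i).height := rfl
        have : (2 * (n:ℤ) + h + 1) ≤ (t:ℤ) := by
          rw [← hτ]; exact_mod_cast hge
        omega
      rw [hsu.2 h hne]
      exact ih hge

include hij in
lemma DE_tail_j : ∀ t, 2 * n ≤ t → (γ.1 t).1 j = zeroV (2 * (n:ℤ) - t) := by
  intro t ht
  apply TreeVert.ext'
  · show ((γ.1 t).1 j).height = 2 * (n:ℤ) - (t:ℤ)
    have := (DE_hI γ hDE).2 t (by omega)
    have hs := hI_sum γ hij t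
    have he : hI γ j t = ((γ.1 t).1 j).height := rfl
    push_cast at this
    omega
  · intro h
    show ((γ.1 t).1 j).labels h = 0
    rcases lt_or_ge h 0 with hh | hh
    · exact DE_j_labels_neg γ hij hDE t h hh
    · refine ((γ.1 t).1 j).supp_below h ?_
      have := (DE_hI γ hDE).2 t (by omega)
      have hs := hI_sum γ hij t
      have he : hI γ j t = ((γ.1 t).1 j).height := rfl
      push_cast at this
      omega

end DE

/-- the first label written on the way up is nonzero (geodesy) -/
lemma DE_read_bottom_ne {i : Fin 2} {n : ℕ} (hDE : DescendsExactly i n γ.1)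
    (hn : 1 ≤ n) : readL γ n i (-(n:ℤ)) ≠ 0 := by
  obtain ⟨j, hij⟩ := other_exists i
  intro h0
  set T := 2 * n + 2 with hT
  have hiT : hI γ i T = (T:ℤ) - 2 * n := (DE_hI γ hDE).2 T (by omega)
  have hi0 : hI γ i 0 = 0 := hI_zero γ i
  have hj0 : hI γ j 0 = 0 := hI_zero γ j
  have hjT : hI γ j T = 2 * (n:ℤ) - T := by
    have := hI_sum γ hij T
    omega
  have horig : ∀ (k : Fin 2) (h : ℤ), ((γ.1 0).1 k).labels h = 0 := by
    intro k h
    rw [γ.2.2]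
    rfl
  obtain ⟨w, hw⟩ := shortcut hij (γ.1 0) (γ.1 T) (1 - (n:ℤ)) (2 * (n:ℤ) - T)
    (by show _ ≤ hI γ i 0; omega)
    (by show _ ≤ hI γ i T; rw [hiT]; push_cast; omega)
    (by show _ ≤ hI γ j 0; push_cast; omega)
    (by show _ ≤ hI γ j T; rw [hjT])
    (by intro m hm
        rw [horig i m]
        rcases lt_or_ge m (-(n:ℤ)) with hc | hc
        · exact (DE_labels_low γ hDE T m hc).symm
        · have : m = -(n:ℤ) := by omega
          rw [this, DE_read_stable γ hDE (-(n:ℤ)) (by omega) T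
            (by rw [hT]; omega), h0])
    (by intro m hm
        rw [horig j m, DE_tail_j γ hij hDE T (by omega)]
        rfl)
  have hdl : (DLGraph 2 q).dist (γ.1 0) (γ.1 T) ≤ w.length := SimpleGraph.dist_le w
  have hdd := γ.2.1 0 T (by omega)
  have hee : hI γ i 0 = ((γ.1 0).1 i).height := rfl
  have hee2 : hI γ j 0 = ((γ.1 0).1 j).height := rfl
  have hee3 : hI γ j T = ((γ.1 T).1 j).height := rfl
  rw [← hee, ← hee2, ← hee3, hi0, hj0, hjT] at hw
  push_cast at hw hdd
  omega

-- ====== asymptotic invariance ======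

variable {γ' : RaySpace 2 q}

lemma rays_reach (γ γ' : RaySpace 2 q) (t : ℕ) :
    (DLGraph 2 q).Reachable (γ.1 t) (γ'.1 t) :=
  (reachable_origin γ t).symm.trans (reachable_origin γ' t)

lemma tau_eq {n : ℕ} {h : ℤ} (hh : -(n:ℤ) ≤ h) :
    ((n + 1 + (h + n).toNat : ℕ) : ℤ) = 2 * n + h + 1 := by
  push_cast
  rw [Int.toNat_of_nonneg (by omega)]
  ring

lemma asymp_n_lt {i : Fin 2} {n n' : ℕ} (hr : Asymptotic γ.1 γ'.1)
    (hDE : DescendsExactly i n γ.1) (hDE' : DescendsExactly i n' γ'.1) :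
    ¬(n < n') := by
  intro hlt
  obtain ⟨C, hC⟩ := hr
  have hnz := DE_read_bottom_ne γ' hDE' (by omega)
  set t := 2 * n' + C + 1 with htdef
  have hL1 : ((γ.1 t).1 i).labels (-(n':ℤ)) = 0 :=
    DE_labels_low γ hDE t _ (by push_cast; omega)
  have hL2 : ((γ'.1 t).1 i).labels (-(n':ℤ)) = readL γ' n' i (-(n':ℤ)) := by
    refine DE_read_stable γ' hDE' _ (by omega) t ?_
    have := tau_eq (n := n') (h := -(n':ℤ)) (by omega)
    omega
  have hdl := dist_label (γ.1 t) (γ'.1 t) (rays_reach γ γ' t) i (-(n':ℤ))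
    (by rw [hL1, hL2]; exact fun hc => hnz hc.symm)
  have e1 := (DE_hI γ hDE).2 t (by omega)
  have e2 := (DE_hI γ' hDE').2 t (by omega)
  have hee : hI γ i t = ((γ.1 t).1 i).height := rfl
  have hee' : hI γ' i t = ((γ'.1 t).1 i).height := rfl
  have hCt := hC t
  push_cast at e1 e2
  omega

lemma asymp_type {i i' : Fin 2} {n n' : ℕ} (hr : Asymptotic γ.1 γ'.1)
    (hDE : DescendsExactly i n γ.1) (hDE' : DescendsExactly i' n' γ'.1) :
    i = i' ∧ n = n' := by
  by_cases hii : i = i'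
  · subst hii
    refine ⟨rfl, ?_⟩
    by_contra hne
    rcases Nat.lt_or_ge n n' with h | h
    · exact asymp_n_lt γ hr hDE hDE' h
    · have hr' : Asymptotic γ'.1 γ.1 := by
        obtain ⟨C, hC⟩ := hr
        exact ⟨C, fun t => by rw [SimpleGraph.dist_comm]; exact hC t⟩
      exact asymp_n_lt γ' hr' hDE' hDE (by omega)
  · exfalso
    obtain ⟨C, hC⟩ := hr
    set t := n + n' + C + 1 with htdef
    have e1 := (DE_hI γ hDE).2 t (by omega)
    have e2 := (DE_hI γ' hDE').2 t (by omega)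
    have e3 := hI_sum γ' (Ne.symm hii) t
    obtain ⟨m, hm1, hm2, _, hm4⟩ := dist_meet (γ.1 t) (γ'.1 t) (rays_reach γ γ' t) i
    have hee : hI γ i t = ((γ.1 t).1 i).height := rfl
    have hee' : hI γ' i t = ((γ'.1 t).1 i).height := rfl
    have hee'' : hI γ' i' t = ((γ'.1 t).1 i').height := rfl
    have hCt := hC t
    push_cast at e1 e2
    omega

lemma asymp_reads {i : Fin 2} {n : ℕ} (hr : Asymptotic γ.1 γ'.1)
    (hDE : DescendsExactly i n γ.1) (hDE' : DescendsExactly i n γ'.1) :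
    ∀ h : ℤ, -(n:ℤ) ≤ h → readL γ n i h = readL γ' n i h := by
  intro h hh
  by_contra hne
  obtain ⟨C, hC⟩ := hr
  set t := n + 1 + (h + n).toNat + n + C with htdef
  have hτ := tau_eq (n := n) hh
  have hL1 : ((γ.1 t).1 i).labels h = readL γ n i h :=
    DE_read_stable γ hDE h hh t (by omega)
  have hL2 : ((γ'.1 t).1 i).labels h = readL γ' n i h :=
    DE_read_stable γ' hDE' h hh t (by omega)
  have hdl := dist_label (γ.1 t) (γ'.1 t) (rays_reach γ γ' t) i h
    (by rw [hL1, hL2]; exact hne)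
  have e1 := (DE_hI γ hDE).2 t (by omega)
  have e2 := (DE_hI γ' hDE').2 t (by omega)
  have hee : hI γ i t = ((γ.1 t).1 i).height := rfl
  have hee' : hI γ' i t = ((γ'.1 t).1 i).height := rfl
  have hCt := hC t
  have htz : (t:ℤ) = 2 * n + h + 1 + n + C := by
    rw [htdef]; push_cast at hτ ⊢; omega
  omega

lemma same_reads_eventually_eq {i : Fin 2} {n : ℕ}
    (hDE : DescendsExactly i n γ.1) (hDE' : DescendsExactly i n γ'.1)
    (hreads : ∀ h : ℤ, -(n:ℤ) ≤ h → readL γ n i h = readL γ' n i h) :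
    ∀ t, 2 * n ≤ t → γ.1 t = γ'.1 t := by
  intro t ht
  obtain ⟨j, hij⟩ := other_exists i
  apply DLVert.ext'
  intro k
  rcases fin2_cases i j k hij with hk | hk
  · rw [hk]
    have e1 := (DE_hI γ hDE).2 t (by omega)
    have e2 := (DE_hI γ' hDE').2 t (by omega)
    apply TreeVert.ext'
    · show ((γ.1 t).1 i).height = ((γ'.1 t).1 i).height
      have hee : hI γ i t = ((γ.1 t).1 i).height := rfl
      have hee' : hI γ' i t = ((γ'.1 t).1 i).height := rfl
      omega
    · intro h
      rcases lt_or_ge h (-(n:ℤ)) with hc | hc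
    
      · rw [DE_labels_low γ hDE t h hc, DE_labels_low γ' hDE' t h hc]
      · rcases lt_or_ge h ((t:ℤ) - 2 * n) with hc2 | hc2
        · have hτ := tau_eq (n := n) hc
          have hτt : n + 1 + (h + n).toNat ≤ t := by omega
          rw [DE_read_stable γ hDE h hc t hτt, DE_read_stable γ' hDE' h hc t hτt]
          exact hreads h hc
        · have hee : hI γ i t = ((γ.1 t).1 i).height := rfl
          have hee' : hI γ' i t = ((γ'.1 t).1 i).height := rfl
          rw [((γ.1 t).1 i).supp_below h (by omega),
            ((γ'.1 t).1 i).supp_below h (by omega)]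
  · rw [hk, DE_tail_j γ hij hDE t ht, DE_tail_j γ' hij hDE' t ht]

lemma same_reads_asymp {i : Fin 2} {n : ℕ}
    (hDE : DescendsExactly i n γ.1) (hDE' : DescendsExactly i n γ'.1)
    (hreads : ∀ h : ℤ, -(n:ℤ) ≤ h → readL γ n i h = readL γ' n i h) :
    Asymptotic γ.1 γ'.1 := by
  have heq := same_reads_eventually_eq γ hDE hDE' hreads
  refine ⟨4 * n, fun t => ?_⟩
  rcases le_or_gt (2 * n) t with ht | ht
  · rw [heq t ht]
    simp [SimpleGraph.dist_self]
  · have h1 := γ.2.1 t (2 * n) (by omega)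
    have h2 := γ'.2.1 t (2 * n) (by omega)
    obtain ⟨w1, hw1⟩ := (ray_reach γ t (2 * n)).exists_walk_length_eq_dist
    obtain ⟨w2, hw2⟩ := (ray_reach γ' (2 * n) t).exists_walk_length_eq_dist
    have hcomm : (DLGraph 2 q).dist (γ'.1 (2*n)) (γ'.1 t) = 2 * n - t := by
      rw [SimpleGraph.dist_comm]; exact h2
    calc (DLGraph 2 q).dist (γ.1 t) (γ'.1 t)
        ≤ (w1.append (w2.copy (heq (2*n) (le_refl _)).symm rfl)).length :=
          SimpleGraph.dist_le _
      _ = (2 * n - t) + (2 * n - t) := by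
          rw [SimpleGraph.Walk.length_append, SimpleGraph.Walk.length_copy,
            hw1, hw2, h1, hcomm]
      _ ≤ 4 * n := by omega

-- ====== topology ======

instance : DiscreteTopology (DLVert d q) := ⟨rfl⟩

lemma cont_eval (t : ℕ) : Continuous (fun γ : RaySpace 2 q => γ.1 t) :=
  (continuous_apply t).comp continuous_subtype_val

/-- basic clopen box : agreement with `γ0` up to time `T` -/
def Box (γ0 : RaySpace 2 q) (T : ℕ) : Set (RaySpace 2 q) :=
  {γ | ∀ t, t ≤ T → γ.1 t = γ0.1 t}

lemma isOpen_Box (γ0 : RaySpace 2 q) (T : ℕ) : IsOpen (Box γ0 T) := by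
  have he : Box γ0 T =
      ⋂ t ∈ Finset.range (T + 1), (fun γ : RaySpace 2 q => γ.1 t) ⁻¹' {γ0.1 t} := by
    ext γ
    simp only [Box, Set.mem_setOf_eq, Set.mem_iInter, Set.mem_preimage,
      Set.mem_singleton_iff, Finset.mem_range, Nat.lt_succ_iff]
  rw [he]
  exact isOpen_biInter_finset fun t _ => (isOpen_discrete _).preimage (cont_eval t)

lemma mem_Box_self (γ0 : RaySpace 2 q) (T : ℕ) : γ0 ∈ Box γ0 T := fun _ _ => rfl

lemma clopen_of_window (A : Set (RaySpace 2 q)) (T : ℕ)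
    (hA : ∀ γ γ', (∀ t, t ≤ T → γ.1 t = γ'.1 t) → γ ∈ A → γ' ∈ A) : IsClopen A := by
  constructor
  · rw [← isOpen_compl_iff, isOpen_iff_forall_mem_open]
    intro γ hγ
    refine ⟨Box γ T, ?_, isOpen_Box γ T, mem_Box_self γ T⟩
    intro γ' hγ' hmem
    exact hγ (hA γ' γ (fun t ht => hγ' t ht) hmem)
  · rw [isOpen_iff_forall_mem_open]
    intro γ hγ
    exact ⟨Box γ T, fun γ' hγ' => hA γ γ' (fun t ht => (hγ' t ht).symm) hγ,
      isOpen_Box γ T, mem_Box_self γ T⟩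

/-- the quotient map to the boundary -/
abbrev QM : RaySpace 2 q → Boundary 2 q := Quotient.mk (asympSetoid 2 q)

lemma isOpen_boundary {U : Set (Boundary 2 q)} :
    IsOpen ((QM (q := q)) ⁻¹' U) ↔ IsOpen U :=
  isQuotientMap_quotient_mk'.isOpen_preimage

lemma isClopen_boundary {U : Set (Boundary 2 q)} (h : IsClopen ((QM (q := q)) ⁻¹' U)) :
    IsClopen U := by
  constructor
  · rw [← isOpen_compl_iff, ← isOpen_boundary, Set.preimage_compl]
    exact h.1.isOpen_compl
  · rw [← isOpen_boundary]
    exact h.2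

lemma preimage_QM (P : RaySpace 2 q → Prop)
    (hP : ∀ γ γ' : RaySpace 2 q, Asymptotic γ.1 γ'.1 → P γ → P γ') :
    (QM (q := q)) ⁻¹' {x | ∃ γr, QM γr = x ∧ P γr} = {γ | P γ} := by
  ext γ
  simp only [Set.mem_preimage, Set.mem_setOf_eq]
  constructor
  · rintro ⟨γr, hqe, hp⟩
    exact hP γr γ (Quotient.exact hqe) hp
  · intro hp
    exact ⟨γ, rfl, hp⟩

-- invariance lemmas in convenient form
lemma asymp_DE {γ γ' : RaySpace 2 q} {i : Fin 2} {n : ℕ} (hr : Asymptotic γ.1 γ'.1)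
    (hDE : DescendsExactly i n γ.1) : DescendsExactly i n γ'.1 := by
  obtain ⟨i1, n1, hDE1⟩ := classify γ'
  obtain ⟨h1, h2⟩ := asymp_type γ hr hDE hDE1
  subst h1; subst h2
  exact hDE1

lemma asymp_hI {γ γ' : RaySpace 2 q} (hr : Asymptotic γ.1 γ'.1) :
    ∀ (k : Fin 2) (t : ℕ), hI γ k t = hI γ' k t := by
  obtain ⟨i0, n0, hDE⟩ := classify γ
  have hDE' : DescendsExactly i0 n0 γ'.1 := asymp_DE hr hDE
  intro k t
  obtain ⟨j0, hij0⟩ := other_exists i0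
  have hval : hI γ i0 t = hI γ' i0 t := by
    rcases le_or_gt t n0 with h | h
    · rw [(DE_hI γ hDE).1 t h, (DE_hI γ' hDE').1 t h]
    · rw [(DE_hI γ hDE).2 t h.le, (DE_hI γ' hDE').2 t h.le]
  rcases fin2_cases i0 j0 k hij0 with hk | hk
  · rw [hk]; exact hval
  · rw [hk]
    have s1 := hI_sum γ hij0 t
    have s2 := hI_sum γ' hij0 t
    omega

-- window determines the type
lemma window_type (γ' : RaySpace 2 q) (i : Fin 2) (n : ℕ) (hn : 1 ≤ n)
    (hw1 : ∀ t, t ≤ n → hI γ' i t = -(t:ℤ)) (hw2 : hI γ' i (n+1) = -(n:ℤ) + 1) :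
    DescendsExactly i n γ'.1 := by
  obtain ⟨i0, n0, hDE0⟩ := classify γ'
  by_cases hii : i0 = i
  · subst hii
    rcases lt_trichotomy n0 n with h | h | h
    · exfalso
      have e1 := (DE_hI γ' hDE0).2 (n0 + 1) (by omega)
      have e2 := hw1 (n0 + 1) (by omega)
      push_cast at e1 e2
      omega
    · subst h; exact hDE0
    · exfalso
      have e1 := (DE_hI γ' hDE0).1 (n + 1) (by omega)
      have e2 := hw2
      push_cast at e1 e2
      omega
  · exfalso
    have hsum := fun t => hI_sum γ' (show i0 ≠ i from hii) t
    rcases Nat.eq_zero_or_pos n0 with h0 | h0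
    · subst h0
      have e1 := (DE_hI γ' hDE0).2 (n + 1) (by omega)
      have e2 := hw2
      have := hsum (n + 1)
      push_cast at e1 e2
      omega
    · have e1 := (DE_hI γ' hDE0).1 1 (by omega)
      have e2 := hw1 1 (by omega)
      have := hsum 1
      push_cast at e1 e2
      omega

lemma clopen_DEset (i : Fin 2) (n : ℕ) (hn : 1 ≤ n) :
    IsClopen {γ : RaySpace 2 q | DescendsExactly i n γ.1} := by
  apply clopen_of_window _ (n + 1)
  intro γ γ' hag hDE
  apply window_type γ' i n hn
  · intro t ht
    show ((γ'.1 t).1 i).height = _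
    rw [← hag t (by omega)]
    exact (DE_hI γ hDE).1 t ht
  · show ((γ'.1 (n+1)).1 i).height = _
    rw [← hag (n+1) (le_refl _)]
    have := (DE_hI γ hDE).2 (n+1) (by omega)
    have hee : hI γ i (n+1) = ((γ.1 (n+1)).1 i).height := rfl
    push_cast at this ⊢
    omega

lemma clopen_Rset (i : Fin 2) (n : ℕ) (hn : 1 ≤ n) (h : ℤ) (c : ℕ) :
    IsClopen {γ : RaySpace 2 q | DescendsExactly i n γ.1 ∧ readL γ n i h = c} := by
  apply clopen_of_window _ (max (n + 1) (n + 1 + (h + n).toNat))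
  rintro γ γ' hag ⟨hDE, hread⟩
  constructor
  · apply window_type γ' i n hn
    · intro t ht
      show ((γ'.1 t).1 i).height = _
      rw [← hag t (by omega)]
      exact (DE_hI γ hDE).1 t ht
    · show ((γ'.1 (n+1)).1 i).height = _
      rw [← hag (n+1) (le_max_left _ _)]
      have := (DE_hI γ hDE).2 (n+1) (by omega)
      have hee : hI γ i (n+1) = ((γ.1 (n+1)).1 i).height := rfl
      push_cast at this ⊢
      omega
  · show ((γ'.1 (n + 1 + (h + n).toNat)).1 i).labels h = c
    rw [← hag _ (le_max_right _ _)]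
    exact hread

lemma clopen_Hset (i : Fin 2) :
    IsClopen {γ : RaySpace 2 q | hI γ i 1 = 1} := by
  apply clopen_of_window _ 1
  intro γ γ' hag hm
  show ((γ'.1 1).1 i).height = 1
  rw [← hag 1 (le_refl _)]
  exact hm

-- ====== the open (non-clopen) sets used near C_0 ======

lemma open_U (i j : Fin 2) (hij : i ≠ j) (h0 : ℕ) (Pr : ℕ → Prop) :
    IsOpen {γ : RaySpace 2 q | (DescendsExactly i 0 γ.1 ∧ Pr (readL γ 0 i (h0:ℤ))) ∨
      ∃ m, h0 + 2 ≤ m ∧ DescendsExactly j m γ.1} := by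
  rw [isOpen_iff_forall_mem_open]
  rintro γ (⟨hDE, hPr⟩ | ⟨m, hm, hDE⟩)
  · refine ⟨Box γ (h0 + 2), ?_, isOpen_Box _ _, mem_Box_self _ _⟩
    intro γ' hb
    obtain ⟨i1, n1, hDE1⟩ := classify γ'
    have hagh : ∀ t, t ≤ h0 + 2 → hI γ' i t = hI γ i t := by
      intro t ht
      show ((γ'.1 t).1 i).height = ((γ.1 t).1 i).height
      rw [hb t ht]
    by_cases hii : i1 = i
    · rw [hii] at hDE1
      have hn1 : n1 = 0 := by
        by_contra hc
        have e1 := (DE_hI γ' hDE1).1 1 (by omega)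
        have e2 := hagh 1 (by omega)
        have e3 := (DE_hI γ hDE).2 1 (by omega)
        push_cast at e1 e3
        omega
      subst hn1
      have hre : readL γ' 0 i (h0:ℤ) = readL γ 0 i (h0:ℤ) := by
        show ((γ'.1 (0 + 1 + ((h0:ℤ) + ((0:ℕ):ℤ)).toNat)).1 i).labels _ = _
        rw [hb _ (by omega)]
        rfl
      exact Or.inl ⟨hDE1, by rw [hre]; exact hPr⟩
    · have hij1 : i1 = j := by
        rcases fin2_cases i j i1 hij with hh | hh
        · exact absurd hh hii
        · exact hh
      rw [hij1] at hDE1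
      have hsum := fun t => hI_sum γ' hij t
      have hn1pos : 1 ≤ n1 := by
        by_contra hc
        have hn0 : n1 = 0 := by omega
        subst hn0
        have e1 := (DE_hI γ' hDE1).2 1 (by omega)
        have e2 := hagh 1 (by omega)
        have e3 := (DE_hI γ hDE).2 1 (by omega)
        have := hsum 1
        push_cast at e1 e3
        omega
      have hge : h0 + 2 ≤ n1 := by
        by_contra hc
        have e1 := (DE_hI γ' hDE1).2 (n1 + 1) (by omega)
        have e2 := hagh (n1 + 1) (by omega)
        have e3 := (DE_hI γ hDE).2 (n1 + 1) (by omega)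
        have := hsum (n1 + 1)
        push_cast at e1 e3
        omega
      exact Or.inr ⟨n1, hge, hDE1⟩
  · refine ⟨Box γ (m + 1), ?_, isOpen_Box _ _, mem_Box_self _ _⟩
    intro γ' hb
    refine Or.inr ⟨m, hm, ?_⟩
    apply window_type γ' j m (by omega)
    · intro t ht
      show ((γ'.1 t).1 j).height = _
      rw [hb t (by omega)]
      exact (DE_hI γ hDE).1 t ht
    · show ((γ'.1 (m+1)).1 j).height = _
      rw [hb (m+1) (le_refl _)]
      have := (DE_hI γ hDE).2 (m+1) (by omega)
      have hee : hI γ j (m+1) = ((γ.1 (m+1)).1 j).height := rfl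
      push_cast at this ⊢
      omega

-- ====== boundary-level sets ======

lemma clopen_CsetB (i : Fin 2) (n : ℕ) (hn : 1 ≤ n) : IsClopen (Cset q i n) := by
  apply isClopen_boundary
  have he : (QM (q := q)) ⁻¹' (Cset q i n) =
      {γ : RaySpace 2 q | DescendsExactly i n γ.1} := by
    unfold Cset
    exact preimage_QM _ (fun γ γ' hr hp => asymp_DE hr hp)
  rw [he]
  exact clopen_DEset i n hn

def HsetB (q : ℕ) (i : Fin 2) : Set (Boundary 2 q) :=
  {x | ∃ γr : RaySpace 2 q, QM γr = x ∧ hI γr i 1 = 1}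

lemma clopen_HsetB (i : Fin 2) : IsClopen (HsetB q i) := by
  apply isClopen_boundary
  have he : (QM (q := q)) ⁻¹' (HsetB q i) = {γ : RaySpace 2 q | hI γ i 1 = 1} := by
    unfold HsetB
    exact preimage_QM _ (fun γ γ' hr hp => by rw [← asymp_hI hr i 1]; exact hp)
  rw [he]
  exact clopen_Hset i

def RsetB (q : ℕ) (i : Fin 2) (n : ℕ) (h : ℤ) (c : ℕ) : Set (Boundary 2 q) :=
  {x | ∃ γr : RaySpace 2 q, QM γr = x ∧
    (DescendsExactly i n γr.1 ∧ readL γr n i h = c)}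

lemma clopen_RsetB (i : Fin 2) (n : ℕ) (hn : 1 ≤ n) (h : ℤ) (hh : -(n:ℤ) ≤ h) (c : ℕ) :
    IsClopen (RsetB q i n h c) := by
  apply isClopen_boundary
  have he : (QM (q := q)) ⁻¹' (RsetB q i n h c) =
      {γ : RaySpace 2 q | DescendsExactly i n γ.1 ∧ readL γ n i h = c} := by
    unfold RsetB
    refine preimage_QM _ ?_
    rintro γ γ' hr ⟨hDE, hre⟩
    refine ⟨asymp_DE hr hDE, ?_⟩
    rw [← asymp_reads γ hr hDE (asymp_DE hr hDE) h hh]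
    exact hre
  rw [he]
  exact clopen_Rset i n hn h c

def UB (q : ℕ) (i j : Fin 2) (h0 : ℕ) (Pr : ℕ → Prop) : Set (Boundary 2 q) :=
  {x | ∃ γr : RaySpace 2 q, QM γr = x ∧
    ((DescendsExactly i 0 γr.1 ∧ Pr (readL γr 0 i (h0:ℤ))) ∨
      ∃ m, h0 + 2 ≤ m ∧ DescendsExactly j m γr.1)}

lemma open_UB (i j : Fin 2) (hij : i ≠ j) (h0 : ℕ) (Pr : ℕ → Prop) :
    IsOpen (UB q i j h0 Pr) := by
  rw [← isOpen_boundary]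
  have he : (QM (q := q)) ⁻¹' (UB q i j h0 Pr) =
      {γ : RaySpace 2 q | (DescendsExactly i 0 γ.1 ∧ Pr (readL γ 0 i (h0:ℤ))) ∨
        ∃ m, h0 + 2 ≤ m ∧ DescendsExactly j m γ.1} := by
    unfold UB
    refine preimage_QM _ ?_
    rintro γ γ' hr (⟨hDE, hPr⟩ | ⟨m, hm, hDE⟩)
    · refine Or.inl ⟨asymp_DE hr hDE, ?_⟩
      rw [← asymp_reads γ hr hDE (asymp_DE hr hDE) (h0:ℤ) (by push_cast; omega)]
      exact hPr
    · exact Or.inr ⟨m, hm, asymp_DE hr hDE⟩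
  rw [he]
  exact open_U i j hij h0 Pr

lemma UB_elim {z : Boundary 2 q} {γr : RaySpace 2 q} (hγr : QM γr = z)
    {i j : Fin 2} (hij : i ≠ j) (hDE : DescendsExactly i 0 γr.1) {h0 : ℕ} {Pr : ℕ → Prop}
    (hz : z ∈ UB q i j h0 Pr) : Pr (readL γr 0 i (h0:ℤ)) := by
  obtain ⟨γ1, hq1, hd⟩ := hz
  have hr : Asymptotic γ1.1 γr.1 := Quotient.exact (hq1.trans hγr.symm)
  rcases hd with ⟨hDE1, hPr⟩ | ⟨m, hm, hDE1⟩
  · rw [← asymp_reads γ1 hr hDE1 (asymp_DE hr hDE1) (h0:ℤ) (by push_cast; omega)]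
    have : DescendsExactly i 0 γr.1 := asymp_DE hr hDE1
    exact hPr
  · exfalso
    have hDEr : DescendsExactly j m γr.1 := asymp_DE hr hDE1
    exact hij (type_unique γr hDE hDEr).1

-- membership/exclusion helpers
lemma not_mem_CsetB {y : Boundary 2 q} {γy : RaySpace 2 q} (hγy : QM γy = y)
    {iy : Fin 2} {ny : ℕ} (hDEy : DescendsExactly iy ny γy.1) {i : Fin 2} {n : ℕ}
    (hne : ¬(i = iy ∧ n = ny)) : y ∉ Cset q i n := by
  rintro ⟨γ1, hq1, hDE1⟩
  have hr : Asymptotic γ1.1 γy.1 := Quotient.exact (hq1.trans hγy.symm)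
  have hDE1y : DescendsExactly i n γy.1 := asymp_DE hr hDE1
  exact hne (type_unique γy hDE1y hDEy)

lemma clopen_split {S : Set (Boundary 2 q)} (hS : IsPreconnected S) {K : Set (Boundary 2 q)}
    (hK : IsClopen K) {x y : Boundary 2 q} (hx : x ∈ S) (hy : y ∈ S) (hxK : x ∈ K)
    (hyK : y ∉ K) : False := by
  obtain ⟨z, _, hz1, hz2⟩ := hS K Kᶜ hK.2 hK.1.isOpen_compl
    (fun z _ => (em (z ∈ K)).elim Or.inl Or.inr) ⟨x, hx, hxK⟩ ⟨y, hy, hyK⟩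
  exact hz2 hz1

-- ====== main theorem ======

theorem boundary_totallyDisconnected_aux {q : ℕ} (hq : 2 ≤ q) :
    TotallyDisconnectedSpace (Boundary 2 q) := by
  constructor
  intro S _ hS x hx y hy
  by_contra hxy
  obtain ⟨γx, hγx⟩ := Quotient.exists_rep x
  obtain ⟨γy, hγy⟩ := Quotient.exists_rep y
  obtain ⟨ix, nx, hDEx⟩ := classify γx
  obtain ⟨iy, ny, hDEy⟩ := classify γy
  by_cases htype : ix = iy ∧ nx = ny
  · -- same type
    obtain ⟨h1, h2⟩ := htype
    rw [← h1, ← h2] at hDEy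
    have hasym : ¬ Asymptotic γx.1 γy.1 := by
      intro hr
      apply hxy
      rw [← hγx, ← hγy]
      exact Quotient.sound hr
    have hread : ∃ h : ℤ, -(nx:ℤ) ≤ h ∧ readL γx nx ix h ≠ readL γy nx ix h := by
      by_contra hc
      push_neg at hc
      exact hasym (same_reads_asymp γx hDEx hDEy (fun h hh => hc h hh))
    obtain ⟨h, hh, hne⟩ := hread
    rcases Nat.eq_zero_or_pos nx with hnx0 | hnx1
    · -- nx = 0
      rw [hnx0] at hDEx hDEy hne hh
      obtain ⟨j, hij⟩ := other_exists ix
      set h0 : ℕ := h.toNat with hh0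
      have hh0e : ((h0:ℕ):ℤ) = h := Int.toNat_of_nonneg (by push_cast at hh; omega)
      by_cases hall : ∀ z ∈ S, ∃ γr : RaySpace 2 q, QM γr = z ∧ DescendsExactly ix 0 γr.1
      · set c := readL γx 0 ix h with hcdef
        have hU := open_UB (q := q) ix j hij h0 (fun v => v = c)
        have hV := open_UB (q := q) ix j hij h0 (fun v => v ≠ c)
        have hcov : S ⊆ UB q ix j h0 (fun v => v = c) ∪ UB q ix j h0 (fun v => v ≠ c) := by
          intro z hz
          obtain ⟨γr, hγr, hDEr⟩ := hall z hz
          rcases em (readL γr 0 ix ((h0:ℕ):ℤ) = c) with he | he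
          · exact Or.inl ⟨γr, hγr, Or.inl ⟨hDEr, he⟩⟩
          · exact Or.inr ⟨γr, hγr, Or.inl ⟨hDEr, he⟩⟩
        have hxU : x ∈ UB q ix j h0 (fun v => v = c) :=
          ⟨γx, hγx, Or.inl ⟨hDEx, by rw [hh0e]⟩⟩
        have hyV : y ∈ UB q ix j h0 (fun v => v ≠ c) :=
          ⟨γy, hγy, Or.inl ⟨hDEy, by rw [hh0e]; exact fun e => hne e.symm⟩⟩
        obtain ⟨z, hzS, hzU, hzV⟩ := hS _ _ hU hV hcov ⟨x, hx, hxU⟩ ⟨y, hy, hyV⟩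
        obtain ⟨γz, hγz, hDEz⟩ := hall z hzS
        have e1 := UB_elim hγz hij hDEz hzU
        have e2 := UB_elim hγz hij hDEz hzV
        exact e2 e1
      · push_neg at hall
        obtain ⟨z, hzS, hz⟩ := hall
        obtain ⟨γz, hγz⟩ := Quotient.exists_rep z
        obtain ⟨iz, nz, hDEz⟩ := classify γz
        have hnz : ¬(iz = ix ∧ nz = 0) := by
          rintro ⟨e1, e2⟩
          apply hz γz hγz
          rw [e1, e2] at hDEz
          exact hDEz
        rcases Nat.eq_zero_or_pos nz with hz0 | hz1
        · have hiz : iz ≠ ix := fun e => hnz ⟨e, hz0⟩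
          refine clopen_split hS (clopen_HsetB iz) hzS hx ?_ ?_
          · refine ⟨γz, hγz, ?_⟩
            have h3 := (DE_hI γz hDEz).2 1 (by omega)
            push_cast at h3
            omega
          · rintro ⟨γ1, hq1, h1⟩
            have hr : Asymptotic γ1.1 γx.1 := Quotient.exact (hq1.trans hγx.symm)
            have h2 := asymp_hI hr iz 1
            have h3 := (DE_hI γx hDEx).2 1 (by omega)
            have h4 := hI_sum γx (show iz ≠ ix from hiz) 1
            push_cast at h3
            omega
        · refine clopen_split hS (clopen_CsetB iz nz hz1) hzS hx ⟨γz, hγz, hDEz⟩ ?_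
          refine not_mem_CsetB hγx hDEx ?_
          rintro ⟨e1, e2⟩
          exact hnz ⟨e1, e2⟩
    · refine clopen_split hS (clopen_RsetB ix nx hnx1 h hh (readL γx nx ix h)) hx hy
        ⟨γx, hγx, hDEx, rfl⟩ ?_
      rintro ⟨γ1, hq1, hDE1, hre1⟩
      have hr : Asymptotic γ1.1 γy.1 := Quotient.exact (hq1.trans hγy.symm)
      have h2 := asymp_reads γ1 hr hDE1 (asymp_DE hr hDE1) h hh
      exact hne (hre1.symm.trans h2)
  · -- different types
    rcases Nat.eq_zero_or_pos nx with hnx0 | hnx1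
    · rcases Nat.eq_zero_or_pos ny with hny0 | hny1
      · have hii : ix ≠ iy := fun e => htype ⟨e, by omega⟩
        refine clopen_split hS (clopen_HsetB ix) hx hy ?_ ?_
        · refine ⟨γx, hγx, ?_⟩
          have h3 := (DE_hI γx hDEx).2 1 (by omega)
          push_cast at h3
          omega
        · rintro ⟨γ1, hq1, h1⟩
          have hr : Asymptotic γ1.1 γy.1 := Quotient.exact (hq1.trans hγy.symm)
          have h2 := asymp_hI hr ix 1
          have h3 := (DE_hI γy hDEy).2 1 (by omega)
          have h4 := hI_sum γy hii 1
          push_cast at h3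
          omega
      · refine clopen_split hS (clopen_CsetB iy ny hny1) hy hx ⟨γy, hγy, hDEy⟩ ?_
        refine not_mem_CsetB hγx hDEx ?_
        rintro ⟨e1, e2⟩
        exact htype ⟨e1.symm, e2.symm⟩
    · refine clopen_split hS (clopen_CsetB ix nx hnx1) hx hy ⟨γx, hγx, hDEx⟩ ?_
      exact not_mem_CsetB hγy hDEy htype


/-- the visual boundary of `DL_2(q)` is totally disconnected. -/
theorem boundary_totallyDisconnected {q : ℕ} (hq : 2 ≤ q) :
    TotallyDisconnectedSpace (Boundary 2 q) :=
  boundary_totallyDisconnected_aux hq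

end DL
end

section
/- Every neighborhood in ∂DL_2(q) of a point of C_0^i (a class of rays that ascend forever in T_i) contains the entire set C_{k,∞}^{1-i} for some k, i.e., all classes that descend at least k edges in T_{1-i} before turning. -/
namespace DL

variable {q d : ℕ}

/-! ### Auxiliary material for Statement 13 -/

section Aux13

private lemma fin2_cases_s13 (a b c : Fin 2) (hab : a ≠ b) : c = a ∨ c = b := by
  revert a b c; decide

private lemma fin2_one_sub_ne (i : Fin 2) : (1 - i) ≠ i := by revert i; decide

private lemma fin2_one_sub_sub (i : Fin 2) : 1 - (1 - i) = i := by revert i; decide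

private lemma tv_ext {u v : TreeVert q} (h1 : u.height = v.height)
    (h2 : ∀ n, u.labels n = v.labels n) : u = v := by
  obtain ⟨a1, b1, _, _, _⟩ := u
  obtain ⟨a2, b2, _, _, _⟩ := v
  subst h1
  have : b1 = b2 := funext h2
  subst this
  rfl

private lemma dl_ext {v w : DLVert 2 q} (h : ∀ k, v.1 k = w.1 k) : v = w :=
  Subtype.ext (funext h)

/-- the (unique) parent of a tree vertex -/
private def parentV (u : TreeVert q) : TreeVert q where
  height := u.height - 1
  labels := fun x => if u.height - 1 ≤ x then 0 else u.labels x
  labels_lt := fun x => by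
    by_cases h : u.height - 1 ≤ x
    · simp [h]
    · simpa [h] using u.labels_lt x
  supp_below := fun x hx => by simp only [if_pos hx]
  fin_supp := u.fin_supp.subset (by
    intro x hx
    simp only [Function.mem_support] at hx ⊢
    intro h0
    apply hx
    split_ifs
    · rfl
    · exact h0)

private lemma parentV_height (u : TreeVert q) : (parentV u).height = u.height - 1 := rfl

private lemma parentV_adj (u : TreeVert q) : treeAdjUp (parentV u) u := by
  constructor
  · show u.height = u.height - 1 + 1; omega
  · intro x hx
    have hx' : x ≠ u.height - 1 := hx
    show u.labels x = if u.height - 1 ≤ x then 0 else u.labels x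
    by_cases h : u.height - 1 ≤ x
    · rw [if_pos h, u.supp_below x (by omega)]
    · rw [if_neg h]

private lemma parent_unique {a b c : TreeVert q} (h1 : treeAdjUp a c) (h2 : treeAdjUp b c) :
    a = b := by
  have hh : a.height = b.height := by have := h1.1; have := h2.1; omega
  refine tv_ext hh (fun x => ?_)
  by_cases hx : x = a.height
  · rw [a.supp_below x (by omega), b.supp_below x (by omega)]
  · rw [← h1.2 x hx, h2.2 x (by omega)]

/-- iterated parent -/
private def iterP (u : TreeVert q) : ℕ → TreeVert q
  | 0 => u
  | k + 1 => parentV (iterP u k)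

private lemma iterP_height (u : TreeVert q) (k : ℕ) : (iterP u k).height = u.height - k := by
  induction k with
  | zero => simp [iterP]
  | succ k ih => show (parentV _).height = _; rw [parentV_height, ih]; push_cast; ring

private lemma iterP_labels (u : TreeVert q) (k : ℕ) (x : ℤ) :
    (iterP u k).labels x = if u.height - k ≤ x then 0 else u.labels x := by
  induction k with
  | zero =>
    simp only [iterP, Nat.cast_zero, sub_zero]
    by_cases h : u.height ≤ x
    · rw [if_pos h, u.supp_below x h]
    · rw [if_neg h]
  | succ k ih =>
    show (if (iterP u k).height - 1 ≤ x then 0 else (iterP u k).labels x) = _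
    rw [iterP_height, ih]
    by_cases h : u.height - (k + 1 : ℕ) ≤ x
    · rw [if_pos (by push_cast at h ⊢; omega), if_pos h]
    · rw [if_neg (by push_cast at h ⊢; omega), if_neg (by push_cast at h ⊢; omega),
        if_neg h]

private lemma iterP_adj (u : TreeVert q) (k : ℕ) :
    treeAdjUp (iterP u (k + 1)) (iterP u k) := parentV_adj _

/-- the spine vertex at depth `s` -/
private def spineVert (q s : ℕ) : TreeVert q :=
  ⟨-(s : ℤ), fun _ => 0, fun _ => Or.inl rfl, fun _ _ => rfl, by simp⟩

private lemma spine_adj (s : ℕ) : treeAdjUp (spineVert q (s + 1)) (spineVert q s) := by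
  constructor
  · show -(s : ℤ) = -((s : ℕ) + 1 : ℕ) + 1; push_cast; ring
  · intro _ _; rfl

private lemma height_pair (v : DLVert 2 q) (i : Fin 2) :
    (v.1 i).height + (v.1 (1 - i)).height = 0 := by
  have h := v.2
  rw [Fin.sum_univ_two] at h
  rcases fin2_cases_s13 0 1 i (by decide) with rfl | rfl
  · show (v.1 0).height + (v.1 1).height = 0
    omega
  · show (v.1 1).height + (v.1 0).height = 0
    omega

private lemma adj_coord {v w : DLVert 2 q} (h : (DLGraph 2 q).Adj v w) (k : Fin 2) :
    treeAdjUp (v.1 k) (w.1 k) ∨ treeAdjUp (w.1 k) (v.1 k) := by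
  obtain ⟨i', j', hij, h1, h2, _⟩ := h
  rcases fin2_cases_s13 i' j' k hij with rfl | rfl
  · exact Or.inl h1
  · exact Or.inr h2

private lemma step_up {v w : DLVert 2 q} (h : (DLGraph 2 q).Adj v w) (k : Fin 2)
    (hh : (w.1 k).height = (v.1 k).height + 1) : treeAdjUp (v.1 k) (w.1 k) := by
  rcases adj_coord h k with h' | h'
  · exact h'
  · exfalso; have := h'.1; omega

private lemma step_down_s13 {v w : DLVert 2 q} (h : (DLGraph 2 q).Adj v w) (k : Fin 2)
    (hh : (w.1 k).height = (v.1 k).height - 1) : treeAdjUp (w.1 k) (v.1 k) := by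
  rcases adj_coord h k with h' | h'
  · exfalso; have := h'.1; omega
  · exact h'

/-- map a DL walk to a tree walk by projection -/
private def projHom (k : Fin 2) : DLGraph 2 q →g TreeGraph q where
  toFun v := v.1 k
  map_rel' := fun h => adj_coord h k

/-- any tree walk has length at least the height increase -/
private lemma tree_walk_len {u v : TreeVert q} (p : (TreeGraph q).Walk u v) :
    v.height - u.height ≤ (p.length : ℤ) := by
  induction p with
  | nil => simp
  | cons h p ih =>
    rename_i a b c
    have hh : b.height = a.height + 1 ∨ a.height = b.height + 1 := by
      rcases h with h' | h'
      · exact Or.inl h'.1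
      · exact Or.inr h'.1
    rw [SimpleGraph.Walk.length_cons]
    push_cast
    omega

/-- any tree walk between vertices with differing labels at level `ℓ`
has length at least the sum of the heights above `ℓ` -/
private lemma tree_walk_label {u v : TreeVert q} (p : (TreeGraph q).Walk u v) (ℓ : ℤ)
    (hne : u.labels ℓ ≠ v.labels ℓ) :
    (u.height - ℓ) + (v.height - ℓ) ≤ (p.length : ℤ) := by
  induction p with
  | nil => exact absurd rfl hne
  | cons h p ih =>
    rename_i a b c
    rw [SimpleGraph.Walk.length_cons]
    by_cases hb : b.labels ℓ = c.labels ℓ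
    · have hab : a.labels ℓ ≠ b.labels ℓ := fun h' => hne (h'.trans hb)
      have hlen := tree_walk_len p
      rcases h with h' | h'
      · have hℓ : ℓ = a.height := by
          by_contra hx
          exact hab (h'.2 ℓ hx).symm
        have hb1 : b.height = a.height + 1 := h'.1
        have h0 : a.labels ℓ = 0 := a.supp_below ℓ (by omega)
        push_cast
        omega
      · have hℓ : ℓ = b.height := by
          by_contra hx
          exact hab (h'.2 ℓ hx)
        have hb1 : a.height = b.height + 1 := h'.1
        push_cast
        omega
    · have := ih hb
      have hh : b.height = a.height + 1 ∨ a.height = b.height + 1 := by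
        rcases h with h' | h'
        · exact Or.inl h'.1
        · exact Or.inr h'.1
      push_cast
      omega

/-- a chain of adjacent vertices gives a walk -/
private lemma chain_walk {V : Type*} {G : SimpleGraph V} (p : ℕ → V)
    (h : ∀ t, G.Adj (p t) (p (t + 1))) (a : ℕ) :
    ∀ k : ℕ, ∃ w : G.Walk (p a) (p (a + k)), w.length = k := by
  intro k
  induction k with
  | zero => exact ⟨SimpleGraph.Walk.nil, rfl⟩
  | succ k ih =>
    obtain ⟨w, hw⟩ := ih
    exact ⟨w.concat (h (a + k)), by rw [SimpleGraph.Walk.length_concat, hw]⟩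

private lemma chain_dist {V : Type*} {G : SimpleGraph V} (p : ℕ → V)
    (h : ∀ t, G.Adj (p t) (p (t + 1))) (a b : ℕ) (hab : a ≤ b) :
    G.dist (p a) (p b) ≤ b - a := by
  obtain ⟨k, rfl⟩ := Nat.exists_eq_add_of_le hab
  obtain ⟨w, hw⟩ := chain_walk p h a k
  simpa [hw] using SimpleGraph.dist_le w

private lemma chain_reach {V : Type*} {G : SimpleGraph V} (p : ℕ → V)
    (h : ∀ t, G.Adj (p t) (p (t + 1))) (a b : ℕ) (hab : a ≤ b) :
    G.Reachable (p a) (p b) := by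
  obtain ⟨k, rfl⟩ := Nat.exists_eq_add_of_le hab
  obtain ⟨w, _⟩ := chain_walk p h a k
  exact w.reachable

/-- building a DL₂ vertex from two tree vertices -/
private def mkDL (q : ℕ) (i : Fin 2) (u w : TreeVert q) : DLVert 2 q :=
  if h : u.height + w.height = 0 then
    ⟨fun k => if k = i then u else w, by
      rw [Fin.sum_univ_two]
      fin_cases i <;> simp <;> omega⟩
  else origin 2 q

private lemma mkDL_fst {i : Fin 2} {u w : TreeVert q} (h : u.height + w.height = 0) :
    (mkDL q i u w).1 i = u := by
  simp [mkDL, h]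

private lemma mkDL_snd {i : Fin 2} {u w : TreeVert q} (h : u.height + w.height = 0) :
    (mkDL q i u w).1 (1 - i) = w := by
  simp [mkDL, h, fin2_one_sub_ne i]

/-- cylinder sets are neighbourhoods in `RaySpace` -/
private lemma open_extract {V : Set (RaySpace 2 q)} (hV : IsOpen V) (γ : RaySpace 2 q)
    (hγ : γ ∈ V) :
    ∃ m : ℕ, ∀ δ : RaySpace 2 q, (∀ t, t ≤ m → δ.1 t = γ.1 t) → δ ∈ V := by
  obtain ⟨W, hWo, hWV⟩ := isOpen_induced_iff.mp hV
  obtain ⟨I, u, hIu, hsub⟩ := isOpen_pi_iff.mp hWo γ.1 (by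
    rw [← hWV] at hγ; exact hγ)
  refine ⟨I.sup id, fun δ hδ => ?_⟩
  rw [← hWV]
  refine hsub (fun a ha => ?_)
  rw [hδ a (Finset.le_sup (f := id) ha)]
  exact (hIu a ha).2

end Aux13

/-- every open neighborhood of a point of `C_0^i` contains all
of `C_{k,∞}^{1-i} = ⋃_{n ≥ k} C_n^{1-i}` for some `k`. -/
theorem nbhd_contains_tail {q : ℕ} (hq : 2 ≤ q) (i : Fin 2) (x : Boundary 2 q)
    (hx : x ∈ Cset q i 0) (U : Set (Boundary 2 q)) (hU : IsOpen U) (hxU : x ∈ U) :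
    ∃ k : ℕ, 0 < k ∧ ∀ n : ℕ, k ≤ n → Cset q (1 - i) n ⊆ U := by
  obtain ⟨γ, hγx, hγd⟩ := hx
  have hγgeo := γ.2.1
  have hγh : ∀ t : ℕ, ((γ.1 t).1 i).height = (t : ℤ) := by
    intro t
    have := hγd.2 t (Nat.zero_le t)
    simpa using this
  have hγh1 : ∀ t : ℕ, ((γ.1 t).1 (1 - i)).height = -(t : ℤ) := by
    intro t
    have h1 := height_pair (γ.1 t) i
    have h2 := hγh t
    omega
  have hγadj : ∀ t : ℕ, (DLGraph 2 q).Adj (γ.1 t) (γ.1 (t + 1)) := by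
    intro t
    have h := hγgeo t (t + 1) (by omega)
    rw [Nat.add_sub_cancel_left] at h
    exact SimpleGraph.dist_eq_one_iff_adj.mp h
  have hγspine : ∀ t : ℕ, (γ.1 t).1 (1 - i) = spineVert q t := by
    intro t
    induction t with
    | zero =>
      rw [γ.2.2]
      exact tv_ext (by norm_num [treeOrigin, origin, spineVert]) (fun _ => rfl)
    | succ t ih =>
      have hdir := step_down_s13 (hγadj t) (1 - i)
        (by rw [hγh1, hγh1]; push_cast; ring)
      rw [ih] at hdir
      exact parent_unique hdir (spine_adj t)
  have hγlab : ∀ t : ℕ, ∀ ℓ : ℤ, ℓ < 0 → ((γ.1 t).1 i).labels ℓ = 0 := by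
    intro t
    induction t with
    | zero => intro ℓ _; rw [γ.2.2]; rfl
    | succ t ih =>
      intro ℓ hℓ
      have hup := step_up (hγadj t) i (by rw [hγh, hγh]; push_cast; ring)
      rw [hup.2 ℓ (by rw [hγh]; omega)]
      exact ih ℓ hℓ
  have hVopen : IsOpen (Quotient.mk (asympSetoid 2 q) ⁻¹' U) :=
    hU.preimage continuous_quotient_mk'
  obtain ⟨m, hm⟩ := open_extract hVopen γ
    (by subst hγx; exact hxU)
  refine ⟨m + 1, Nat.succ_pos m, ?_⟩
  intro n hn x' hx'
  obtain ⟨δ, hδx', hδd⟩ := hx'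
  rw [← hδx']
  have hn1 : 1 ≤ n := le_trans (by omega) hn
  have hδgeo := δ.2.1
  have hδadj : ∀ t : ℕ, (DLGraph 2 q).Adj (δ.1 t) (δ.1 (t + 1)) := by
    intro t
    have h := hδgeo t (t + 1) (by omega)
    rw [Nat.add_sub_cancel_left] at h
    exact SimpleGraph.dist_eq_one_iff_adj.mp h
  have hδh1 : ∀ t : ℕ, t ≤ n → ((δ.1 t).1 (1 - i)).height = -(t : ℤ) := hδd.1
  have hδh2 : ∀ t : ℕ, n ≤ t → ((δ.1 t).1 (1 - i)).height = (t : ℤ) - 2 * n := hδd.2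
  have hδhi1 : ∀ t : ℕ, t ≤ n → ((δ.1 t).1 i).height = (t : ℤ) := by
    intro t ht
    have h1 := height_pair (δ.1 t) i
    have h2 := hδh1 t ht
    omega
  have hδhi2 : ∀ t : ℕ, n ≤ t → ((δ.1 t).1 i).height = 2 * (n : ℤ) - t := by
    intro t ht
    have h1 := height_pair (δ.1 t) i
    have h2 := hδh2 t ht
    omega
  have hδspine : ∀ t : ℕ, t ≤ n → (δ.1 t).1 (1 - i) = spineVert q t := by
    intro t
    induction t with
    | zero =>
      intro _
      rw [δ.2.2]
      exact tv_ext (by norm_num [treeOrigin, origin, spineVert]) (fun _ => rfl)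
    | succ t ih =>
      intro ht
      have hdir := step_down_s13 (hδadj t) (1 - i)
        (by rw [hδh1 t (by omega), hδh1 (t + 1) ht]; push_cast; ring)
      rw [ih (by omega)] at hdir
      exact parent_unique hdir (spine_adj t)
  have hδlab : ∀ t : ℕ, t ≤ n → ∀ ℓ : ℤ, ℓ < 0 → ((δ.1 t).1 i).labels ℓ = 0 := by
    intro t
    induction t with
    | zero => intro _ ℓ _; rw [δ.2.2]; rfl
    | succ t ih =>
      intro ht ℓ hℓ
      have hup := step_up (hδadj t) i
        (by rw [hδhi1 t (by omega), hδhi1 (t + 1) ht]; push_cast; ring)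
      rw [hup.2 ℓ (by rw [hδhi1 t (by omega)]; omega)]
      exact ih (by omega) ℓ hℓ
  have hδdesc : ∀ s : ℕ, (δ.1 (n + s)).1 i = iterP ((δ.1 n).1 i) s := by
    intro s
    induction s with
    | zero => rfl
    | succ s ih =>
      have hdn := step_down_s13 (hδadj (n + s)) i
        (by rw [hδhi2 (n + s) (by omega), hδhi2 (n + s + 1) (by omega)]; push_cast; ring)
      rw [ih] at hdn
      exact parent_unique hdn (iterP_adj _ s)
  obtain ⟨c, hc⟩ : ∃ c, ((δ.1 (n + 1)).1 (1 - i)).labels (-(n : ℤ)) = c := ⟨_, rfl⟩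
  have hcstab : ∀ t : ℕ, n + 1 ≤ t → ((δ.1 t).1 (1 - i)).labels (-(n : ℤ)) = c := by
    intro t ht
    obtain ⟨s, rfl⟩ := Nat.exists_eq_add_of_le ht
    clear ht
    induction s with
    | zero => exact hc
    | succ s ih =>
      have hup := step_up (hδadj (n + 1 + s)) (1 - i)
        (by rw [hδh2 (n + 1 + s) (by omega), hδh2 (n + 1 + s + 1) (by omega)]; push_cast; ring)
      show ((δ.1 (n + 1 + s + 1)).1 (1 - i)).labels (-(n : ℤ)) = c
      rw [hup.2 (-(n : ℤ)) (by rw [hδh2 (n + 1 + s) (by omega)]; push_cast; omega)]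
      exact ih
  have hcne : c ≠ 0 := by
    intro hc0
    have e1 : (δ.1 (n + 1)).1 (1 - i) = (δ.1 (n - 1)).1 (1 - i) := by
      rw [hδspine (n - 1) (by omega)]
      have hup := step_up (hδadj n) (1 - i)
        (by rw [hδh1 n le_rfl, hδh2 (n + 1) (by omega)]; push_cast; ring)
      refine tv_ext ?_ ?_
      · rw [hδh2 (n + 1) (by omega)]
        show _ = -((n - 1 : ℕ) : ℤ)
        push_cast [Nat.cast_sub hn1]
        ring
      · intro x
        by_cases hx : x = -(n : ℤ)
        · subst hx
          rw [hc, hc0]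
          rfl
        · rw [hup.2 x (by rw [hδh1 n le_rfl]; omega), hδspine n le_rfl]
          rfl
    have e2 : (δ.1 (n + 1)).1 i = (δ.1 (n - 1)).1 i := by
      have hup := step_up (hδadj (n - 1)) i
        (by rw [hδhi1 (n - 1) (by omega), hδhi1 (n - 1 + 1) (by omega)]; push_cast; ring)
      have hdn := step_down_s13 (hδadj n) i
        (by rw [hδhi1 n le_rfl, hδhi2 (n + 1) (by omega)]; push_cast; ring)
      have h' : treeAdjUp ((δ.1 (n - 1)).1 i) ((δ.1 n).1 i) := by
        rwa [show n - 1 + 1 = n by omega] at hup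
      exact parent_unique hdn h'
    have heq : δ.1 (n + 1) = δ.1 (n - 1) := dl_ext (fun k => by
      rcases fin2_cases_s13 i (1 - i) k (fin2_one_sub_ne i).symm with rfl | rfl
      · exact e2
      · exact e1)
    have hd := hδgeo (n - 1) (n + 1) (by omega)
    rw [heq, SimpleGraph.dist_self] at hd
    omega
  obtain ⟨f, hf⟩ : ∃ f : ℕ → DLVert 2 q, f = fun t =>
      if t ≤ n then γ.1 t
      else mkDL q i (iterP ((γ.1 n).1 i) (t - n)) ((δ.1 t).1 (1 - i)) := ⟨_, rfl⟩
  have hfle : ∀ t, t ≤ n → f t = γ.1 t := by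
    intro t ht
    simp only [hf]
    rw [if_pos ht]
  have hsum : ∀ t, n < t →
      (iterP ((γ.1 n).1 i) (t - n)).height + ((δ.1 t).1 (1 - i)).height = 0 := by
    intro t ht
    rw [iterP_height, hγh n, hδh2 t (by omega)]
    have hcast : ((t - n : ℕ) : ℤ) = (t : ℤ) - n := by push_cast; omega
    rw [hcast]
    ring
  have hfi : ∀ t, n < t → (f t).1 i = iterP ((γ.1 n).1 i) (t - n) := by
    intro t ht
    simp only [hf]
    rw [if_neg (by omega)]
    exact mkDL_fst (hsum t ht)
  have hf1 : ∀ t, n < t → (f t).1 (1 - i) = (δ.1 t).1 (1 - i) := by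
    intro t ht
    simp only [hf]
    rw [if_neg (by omega)]
    exact mkDL_snd (hsum t ht)
  have hfh1 : ∀ t : ℕ, n ≤ t → ((f t).1 (1 - i)).height = (t : ℤ) - 2 * n := by
    intro t ht
    rcases eq_or_lt_of_le ht with rfl | h
    · rw [hfle n le_rfl, hγh1 n]
      ring
    · rw [hf1 t h, hδh2 t ht]
  have hfadj : ∀ t, (DLGraph 2 q).Adj (f t) (f (t + 1)) := by
    intro t
    by_cases h1 : t + 1 ≤ n
    · rw [hfle t (by omega), hfle (t + 1) h1]
      exact hγadj t
    · by_cases h2 : t = n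
      · subst h2
        rw [hfle t le_rfl]
        refine ⟨1 - i, i, fin2_one_sub_ne i, ?_, ?_, ?_⟩
        · rw [hf1 (t + 1) (by omega)]
          have hup := step_up (hδadj t) (1 - i)
            (by rw [hδh1 t le_rfl, hδh2 (t + 1) (by omega)]; push_cast; ring)
          rw [hγspine t, ← hδspine t le_rfl]
          exact hup
        · rw [hfi (t + 1) (by omega), show t + 1 - t = 1 by omega]
          exact iterP_adj _ 0
        · intro k hk1 hk2
          rcases fin2_cases_s13 i (1 - i) k (fin2_one_sub_ne i).symm with rfl | rfl
          · exact absurd rfl hk2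
          · exact absurd rfl hk1
      · have hnt : n < t := by omega
        refine ⟨1 - i, i, fin2_one_sub_ne i, ?_, ?_, ?_⟩
        · rw [hf1 t hnt, hf1 (t + 1) (by omega)]
          exact step_up (hδadj t) (1 - i)
            (by rw [hδh2 t (by omega), hδh2 (t + 1) (by omega)]; push_cast; ring)
        · rw [hfi t hnt, hfi (t + 1) (by omega), show t + 1 - n = (t - n) + 1 by omega]
          exact iterP_adj _ _
        · intro k hk1 hk2
          rcases fin2_cases_s13 i (1 - i) k (fin2_one_sub_ne i).symm with rfl | rfl
          · exact absurd rfl hk2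
          · exact absurd rfl hk1
  have hfgeo : IsGeodesicRay f := by
    intro a b hab
    have hub : (DLGraph 2 q).dist (f a) (f b) ≤ b - a := chain_dist f hfadj a b hab
    by_cases hbn : b ≤ n
    · rw [hfle a (by omega), hfle b hbn]
      exact hγgeo a b hab
    · obtain ⟨p, hp⟩ := (chain_reach f hfadj a b hab).exists_walk_length_eq_dist
      by_cases han : n ≤ a
      · have hlow : ((f b).1 (1 - i)).height - ((f a).1 (1 - i)).height ≤
            ((p.map (projHom (1 - i))).length : ℤ) := tree_walk_len _
        rw [SimpleGraph.Walk.length_map, hp] at hlow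
        rw [hfh1 b (by omega), hfh1 a han] at hlow
        omega
      · have hne : ((f a).1 (1 - i)).labels (-(n : ℤ)) ≠
            ((f b).1 (1 - i)).labels (-(n : ℤ)) := by
          rw [hfle a (by omega), hγspine a, hf1 b (by omega), hcstab b (by omega)]
          exact fun h => hcne h.symm
        have hlow : (((f a).1 (1 - i)).height - (-(n : ℤ))) +
            (((f b).1 (1 - i)).height - (-(n : ℤ))) ≤
            ((p.map (projHom (1 - i))).length : ℤ) := tree_walk_label _ _ hne
        rw [SimpleGraph.Walk.length_map, hp] at hlow
        have ha1 : ((f a).1 (1 - i)).height = -(a : ℤ) := by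
          rw [hfle a (by omega), hγh1]
        rw [ha1, hfh1 b (by omega)] at hlow
        omega
  have hf0 : f 0 = origin 2 q := by
    rw [hfle 0 (by omega)]
    exact γ.2.2
  have hfeq : ∀ t : ℕ, 2 * n ≤ t → f t = δ.1 t := by
    intro t ht
    have hnt : n < t := by omega
    refine dl_ext (fun k => ?_)
    rcases fin2_cases_s13 i (1 - i) k (fin2_one_sub_ne i).symm with rfl | rfl
    · have hδi : (δ.1 t).1 k = iterP ((δ.1 n).1 k) (t - n) := by
        have h := hδdesc (t - n)
        rwa [show n + (t - n) = t by omega] at h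
      rw [hfi t hnt, hδi]
      refine tv_ext ?_ ?_
      · rw [iterP_height, iterP_height, hγh n, hδhi1 n le_rfl]
      · intro x
        rw [iterP_labels, iterP_labels, hγh n, hδhi1 n le_rfl]
        by_cases hx : (n : ℤ) - ((t - n : ℕ) : ℤ) ≤ x
        · rw [if_pos hx, if_pos hx]
        · rw [if_neg hx, if_neg hx, hγlab n x (by push_cast at hx ⊢; omega),
            hδlab n le_rfl x (by push_cast at hx ⊢; omega)]
    · exact hf1 t hnt
  have hasym : Asymptotic f δ.1 := by
    refine ⟨4 * n, fun t => ?_⟩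
    by_cases ht : 2 * n ≤ t
    · rw [hfeq t ht, SimpleGraph.dist_self]
      exact Nat.zero_le _
    · obtain ⟨w1, hw1⟩ := chain_walk f hfadj t (2 * n - t)
      obtain ⟨w2, hw2⟩ := chain_walk δ.1 hδadj t (2 * n - t)
      have he : f (t + (2 * n - t)) = δ.1 (t + (2 * n - t)) := hfeq _ (by omega)
      calc (DLGraph 2 q).dist (f t) (δ.1 t)
          ≤ (w1.append ((w2.reverse).copy he.symm rfl)).length := SimpleGraph.dist_le _
        _ = (2 * n - t) + (2 * n - t) := by
            rw [SimpleGraph.Walk.length_append, SimpleGraph.Walk.length_copy,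
              SimpleGraph.Walk.length_reverse, hw1, hw2]
        _ ≤ 4 * n := by omega
  have hquot : Quotient.mk (asympSetoid 2 q) (⟨f, hfgeo, hf0⟩ : RaySpace 2 q) =
      Quotient.mk (asympSetoid 2 q) δ := Quotient.sound hasym
  rw [← hquot]
  exact hm ⟨f, hfgeo, hf0⟩ (fun t ht => hfle t (by omega))

end DL
end
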